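/- arXiv:2209.14481 — 4 statements merged into one kernel-verified Lean document; each statement's English description precedes it below -/
import Mathlib

section
/- Let ω : ℝ² → ℝ be integrable and essentially bounded. Then for every x ∈ ℝ² the integral ∫_{ℝ²} K(x−y) ω(y) dy converges absolutely and equals −vec( (i/(2π)) ∫_{ℝ²} ω(y) / conj(⟵(y−x)) dy ), where the complex integral also converges absolutely. -/
open MeasureTheory

/-- Identify `ℂ` with `ℝ²` via `vec (a + b i) = (a, b)`. -/
def vec (z : ℂ) : ℝ × ℝ := (z.re, z.im)

/-- Identify `ℝ²` with `ℂ`: `⟵(x₁, x₂) = x₁ + i x₂`. -/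
noncomputable def toC (x : ℝ × ℝ) : ℂ := x.1 + x.2 * Complex.I

/-- The Biot–Savart kernel `K x = (1/(2π)) x^⊥ / |x|²` on `ℝ² \ {0}` (junk value `0` at `0`). -/
noncomputable def K (x : ℝ × ℝ) : ℝ × ℝ :=
  (2 * Real.pi * (x.1 ^ 2 + x.2 ^ 2))⁻¹ • (-x.2, x.1)

lemma oneDim (c : ℝ) :
    IntegrableOn (fun t : ℝ => |t - c| ^ (-(1/2) : ℝ)) (Metric.ball c 1) volume := by
  have h1 : IntervalIntegrable (fun t : ℝ => |t| ^ (-(1/2) : ℝ)) volume 0 1 := by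
    have h := intervalIntegral.intervalIntegrable_rpow' (a := 0) (b := 1)
      (r := -(1/2)) (by norm_num)
    rw [intervalIntegrable_iff, Set.uIoc_of_le zero_le_one] at h ⊢
    exact h.congr_fun (fun t ht => by rw [abs_of_pos ht.1]) measurableSet_Ioc
  have h2 : IntervalIntegrable (fun t : ℝ => |t| ^ (-(1/2) : ℝ)) volume (-1) 0 := by
    have := (IntervalIntegrable.iff_comp_neg).mp h1
    simp only [abs_neg, neg_zero] at this
    exact this.symm
  have h3 := (h2.trans h1).comp_sub_right c
  rw [Real.ball_eq_Ioo]
  rw [show c - 1 = -1 + c by ring, show c + 1 = 1 + c by ring,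
    ← intervalIntegrable_iff_integrableOn_Ioo_of_le (by linarith)]
  exact h3

lemma K_norm_le (z : ℝ × ℝ) : ‖K z‖ ≤ (2 * Real.pi)⁻¹ * ‖z‖⁻¹ := by
  have hπ : (0:ℝ) < 2 * Real.pi := by positivity
  rcases eq_or_ne z 0 with rfl | hz
  · simp [K]
  · have hM : 0 < ‖z‖ := norm_pos_iff.mpr hz
    have hMdef : ‖z‖ = max |z.1| |z.2| := by
      simp [Prod.norm_def, Real.norm_eq_abs]
    have hd : ‖z‖ ^ 2 ≤ z.1 ^ 2 + z.2 ^ 2 := by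
      rw [hMdef]
      rcases max_cases |z.1| |z.2| with ⟨h, _⟩ | ⟨h, _⟩ <;> rw [h] <;>
        nlinarith [sq_nonneg z.1, sq_nonneg z.2, sq_abs z.1, sq_abs z.2]
    have hdpos : 0 < z.1 ^ 2 + z.2 ^ 2 := lt_of_lt_of_le (by positivity) hd
    have hKnorm : ‖K z‖ = (2 * Real.pi * (z.1 ^ 2 + z.2 ^ 2))⁻¹ * ‖z‖ := by
      rw [K, norm_smul, Real.norm_eq_abs, abs_of_pos (by positivity), hMdef]
      simp [Prod.norm_def, Real.norm_eq_abs, max_comm]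
    rw [hKnorm, mul_inv, mul_assoc]
    gcongr (2 * Real.pi)⁻¹ * ?_
    rw [inv_mul_le_iff₀ hdpos]
    calc ‖z‖ = ‖z‖ ^ 2 * ‖z‖⁻¹ := by field_simp [pow_two]
    _ ≤ (z.1 ^ 2 + z.2 ^ 2) * ‖z‖⁻¹ := by gcongr

example : True := trivial

lemma K_prod_le (z : ℝ × ℝ) (h1 : z.1 ≠ 0) (h2 : z.2 ≠ 0) :
    ‖K z‖ ≤ (2 * Real.pi)⁻¹ * (|z.1| ^ (-(1/2) : ℝ) * |z.2| ^ (-(1/2) : ℝ)) := by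
  have hπ : (0:ℝ) < 2 * Real.pi := by positivity
  have hz : z ≠ 0 := fun h => h1 (by simp [h])
  have hM : 0 < ‖z‖ := norm_pos_iff.mpr hz
  have hMdef : ‖z‖ = max |z.1| |z.2| := by simp [Prod.norm_def, Real.norm_eq_abs]
  have hd : ‖z‖ ^ 2 ≤ z.1 ^ 2 + z.2 ^ 2 := by
    rw [hMdef]
    rcases max_cases |z.1| |z.2| with ⟨h, _⟩ | ⟨h, _⟩ <;> rw [h] <;>
      nlinarith [sq_nonneg z.1, sq_nonneg z.2, sq_abs z.1, sq_abs z.2]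
  have hdpos : 0 < z.1 ^ 2 + z.2 ^ 2 := lt_of_lt_of_le (by positivity) hd
  have hA : (0:ℝ) < |z.1| * |z.2| := by positivity
  have hKnorm : ‖K z‖ = (2 * Real.pi * (z.1 ^ 2 + z.2 ^ 2))⁻¹ * ‖z‖ := by
    rw [K, norm_smul, Real.norm_eq_abs, abs_of_pos (by positivity), hMdef]
    simp [Prod.norm_def, Real.norm_eq_abs, max_comm]
  rw [hKnorm, mul_inv, mul_assoc]
  gcongr (2 * Real.pi)⁻¹ * ?_
  rw [← Real.mul_rpow (abs_nonneg _) (abs_nonneg _)]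
  set A := |z.1| * |z.2| with hAdef
  have hAd : A ≤ z.1 ^ 2 + z.2 ^ 2 := by
    rw [hAdef]; nlinarith [sq_nonneg (|z.1| - |z.2|), sq_abs z.1, sq_abs z.2]
  refine le_of_pow_le_pow_left₀ (n := 2) two_ne_zero (by positivity) ?_
  have hr : (A ^ (-(1/2) : ℝ)) ^ 2 = A⁻¹ := by
    rw [← Real.rpow_natCast (A ^ (-(1/2) : ℝ)) 2, ← Real.rpow_mul hA.le]
    norm_num [Real.rpow_neg_one]
  rw [hr, mul_pow]
  calc ((z.1 ^ 2 + z.2 ^ 2)⁻¹) ^ 2 * ‖z‖ ^ 2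
      ≤ ((z.1 ^ 2 + z.2 ^ 2)⁻¹) ^ 2 * (z.1 ^ 2 + z.2 ^ 2) := by gcongr
    _ = (z.1 ^ 2 + z.2 ^ 2)⁻¹ := by field_simp [pow_two]
    _ ≤ A⁻¹ := by exact inv_anti₀ hA hAd

lemma hpt (ω : ℝ × ℝ → ℝ) (x y : ℝ × ℝ) :
    (ω y : ℂ) / (starRingEnd ℂ) (toC (y - x)) =
      (2 * Real.pi * Complex.I) * toC (ω y • K (x - y)) := by
  obtain ⟨p, hp⟩ : ∃ p, x.1 - y.1 = p := ⟨_, rfl⟩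
  obtain ⟨q, hq⟩ : ∃ q, x.2 - y.2 = q := ⟨_, rfl⟩
  have e1 : (y - x).1 = -p := by simp [← hp]
  have e2 : (y - x).2 = -q := by simp [← hq]
  have e3 : (x - y).1 = p := hp
  have e4 : (x - y).2 = q := hq
  by_cases hd : p ^ 2 + q ^ 2 = 0
  · have hp0 : p = 0 := by nlinarith [sq_nonneg p, sq_nonneg q]
    have hq0 : q = 0 := by nlinarith [sq_nonneg p, sq_nonneg q]
    simp [toC, K, e1, e2, e3, e4, hp0, hq0]
  · have hne : (starRingEnd ℂ) (toC (y - x)) ≠ 0 := by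
      simp only [toC, e1, e2, map_add, map_mul, Complex.conj_ofReal, Complex.conj_I]
      intro h
      rw [Complex.ext_iff] at h
      simp at h
      apply hd
      rw [h.1, h.2]; ring
    have hd2 : 2 * Real.pi * (p ^ 2 + q ^ 2) ≠ 0 := by
      have := Real.pi_ne_zero; positivity
    rw [div_eq_iff hne]
    simp only [toC, K, e1, e2, e3, e4, Prod.smul_mk, smul_eq_mul, map_add, map_mul,
      Complex.conj_ofReal, Complex.conj_I]
    rw [Complex.ext_iff]
    have hd3 : q ^ 2 + p ^ 2 ≠ 0 := fun h => hd (by linarith)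
    constructor <;>
    · simp [Complex.mul_re, Complex.mul_im, Complex.add_re, Complex.add_im,
        ← Complex.ofReal_pow, ← Complex.ofReal_add, Complex.normSq_ofReal]
      field_simp <;> ring

lemma vec_toC (w : ℝ × ℝ) : vec (toC w) = w := by simp [vec, toC]

lemma vec_neg (z : ℂ) : vec (-z) = -vec z := rfl

noncomputable def vecL : ℂ →L[ℝ] ℝ × ℝ := Complex.reCLM.prod Complex.imCLM

noncomputable def toCL : ℝ × ℝ →L[ℝ] ℂ :=
  Complex.ofRealCLM.comp (ContinuousLinearMap.fst ℝ ℝ ℝ) +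
    Complex.I • Complex.ofRealCLM.comp (ContinuousLinearMap.snd ℝ ℝ ℝ)

lemma toCL_eq (w : ℝ × ℝ) : toCL w = toC w := by
  simp [toCL, toC]; ring

lemma hKmeas : Measurable K := by
  have h1 : Measurable fun z : ℝ × ℝ => (2 * Real.pi * (z.1 ^ 2 + z.2 ^ 2))⁻¹ :=
    (((measurable_fst.pow_const 2).add (measurable_snd.pow_const 2)).const_mul _).inv
  exact h1.smul (measurable_snd.neg.prodMk measurable_fst)


/-- For `ω` integrable and essentially bounded, `∫ K(x-y) ω(y) dy` converges absolutely and
equals `-vec((i/(2π)) ∫ ω(y)/conj(⟵(y-x)) dy)`, the latter also converging absolutely. -/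
theorem stmt3 (ω : ℝ × ℝ → ℝ) (hint : Integrable ω)
    (hbdd : ∃ C : ℝ, ∀ᵐ y : ℝ × ℝ ∂volume, |ω y| ≤ C) (x : ℝ × ℝ) :
    Integrable (fun y => ω y • K (x - y)) ∧
    Integrable (fun y => (ω y : ℂ) / (starRingEnd ℂ) (toC (y - x))) ∧
    (∫ y, ω y • K (x - y)) =
      -vec ((Complex.I / (2 * Real.pi)) *
        ∫ y, (ω y : ℂ) / (starRingEnd ℂ) (toC (y - x))) := by
  obtain ⟨C₀, hC₀⟩ := hbdd
  set C := max C₀ 0 with hCdef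
  have hC : ∀ᵐ y : ℝ × ℝ ∂volume, |ω y| ≤ C := hC₀.mono fun y h => h.trans (le_max_left _ _)
  have hFm : AEStronglyMeasurable (fun y => ω y • K (x - y)) volume :=
    hint.aestronglyMeasurable.smul
      ((hKmeas.comp (measurable_const.sub measurable_id)).aestronglyMeasurable)
  set s := Metric.ball x 1 with hsdef
  have hs : MeasurableSet s := measurableSet_ball
  -- null sets where y is on an axis through x
  have hnull1 : volume {y : ℝ × ℝ | y.1 = x.1} = 0 := by
    have : {y : ℝ × ℝ | y.1 = x.1} = ({x.1} : Set ℝ) ×ˢ (Set.univ : Set ℝ) := by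
      ext y
      simp only [Set.mem_setOf_eq, Set.mem_prod, Set.mem_singleton_iff, Set.mem_univ, and_true]
    rw [this, Measure.volume_eq_prod, Measure.prod_prod]
    simp
  have hnull2 : volume {y : ℝ × ℝ | y.2 = x.2} = 0 := by
    have : {y : ℝ × ℝ | y.2 = x.2} = (Set.univ : Set ℝ) ×ˢ ({x.2} : Set ℝ) := by
      ext y
      simp only [Set.mem_setOf_eq, Set.mem_prod, Set.mem_singleton_iff, Set.mem_univ, true_and]
    rw [this, Measure.volume_eq_prod, Measure.prod_prod]
    simp
  have hax : ∀ᵐ y : ℝ × ℝ ∂volume, y.1 ≠ x.1 ∧ y.2 ≠ x.2 := by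
    have h1 : ∀ᵐ y : ℝ × ℝ ∂volume, y.1 ≠ x.1 := by
      rw [ae_iff]; simpa using hnull1
    have h2 : ∀ᵐ y : ℝ × ℝ ∂volume, y.2 ≠ x.2 := by
      rw [ae_iff]; simpa using hnull2
    exact h1.and h2
  -- integrable on the ball
  have hprod : IntegrableOn
      (fun y : ℝ × ℝ => |y.1 - x.1| ^ (-(1/2) : ℝ) * |y.2 - x.2| ^ (-(1/2) : ℝ)) s volume := by
    have hsp : s = Metric.ball x.1 1 ×ˢ Metric.ball x.2 1 := by
      rw [hsdef, ← ball_prod_same]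
    rw [IntegrableOn, hsp, Measure.volume_eq_prod, ← Measure.prod_restrict]
    exact Integrable.mul_prod (oneDim x.1) (oneDim x.2)
  have hI1 : IntegrableOn (fun y => ω y • K (x - y)) s volume := by
    refine Integrable.mono' (hprod.const_mul ((2 * Real.pi)⁻¹ * C))
      hFm.restrict ?_
    · filter_upwards [ae_restrict_of_ae hC, ae_restrict_of_ae hax] with y hCy haxy
      rw [norm_smul, Real.norm_eq_abs]
      have hb := K_prod_le (x - y) (sub_ne_zero.mpr (Ne.symm haxy.1))
        (sub_ne_zero.mpr (Ne.symm haxy.2))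
      calc |ω y| * ‖K (x - y)‖
          ≤ C * ((2 * Real.pi)⁻¹ * (|(x - y).1| ^ (-(1/2):ℝ) * |(x - y).2| ^ (-(1/2):ℝ))) := by
            apply mul_le_mul hCy hb (norm_nonneg _) (le_trans (abs_nonneg _) hCy)
        _ = (2 * Real.pi)⁻¹ * C * (|y.1 - x.1| ^ (-(1/2):ℝ) * |y.2 - x.2| ^ (-(1/2):ℝ)) := by
            rw [show (x - y).1 = x.1 - y.1 from rfl, show (x - y).2 = x.2 - y.2 from rfl,
              abs_sub_comm x.1 y.1, abs_sub_comm x.2 y.2]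
            ring
  have hI2 : IntegrableOn (fun y => ω y • K (x - y)) sᶜ volume := by
    refine Integrable.mono' ((hint.norm.const_mul (2 * Real.pi)⁻¹).integrableOn)
      hFm.restrict ?_
    filter_upwards [ae_restrict_mem hs.compl] with y hy
    rw [norm_smul, Real.norm_eq_abs]
    have h1 : (1:ℝ) ≤ ‖x - y‖ := by
      have : ¬ dist y x < 1 := by simpa [hsdef, Metric.mem_ball] using hy
      rw [dist_eq_norm] at this
      rw [show x - y = -(y - x) by ring, norm_neg]
      linarith
    have hb : ‖K (x - y)‖ ≤ (2 * Real.pi)⁻¹ := by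
      refine (K_norm_le (x - y)).trans ?_
      have : ‖x - y‖⁻¹ ≤ 1 := by
        rw [inv_le_one_iff₀]; right; exact h1
      calc (2 * Real.pi)⁻¹ * ‖x - y‖⁻¹ ≤ (2 * Real.pi)⁻¹ * 1 := by
            apply mul_le_mul_of_nonneg_left this (by positivity)
        _ = (2 * Real.pi)⁻¹ := mul_one _
    calc |ω y| * ‖K (x - y)‖ ≤ |ω y| * (2 * Real.pi)⁻¹ :=
          mul_le_mul_of_nonneg_left hb (abs_nonneg _)
      _ = (2 * Real.pi)⁻¹ * ‖ω y‖ := by rw [Real.norm_eq_abs]; ring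
  have hF : Integrable (fun y => ω y • K (x - y)) volume := by
    rw [← integrableOn_univ, ← Set.union_compl_self s]
    exact integrableOn_union.mpr ⟨hI1, hI2⟩
  refine ⟨hF, ?_, ?_⟩
  · have h := (toCL.integrable_comp hF).const_mul (2 * Real.pi * Complex.I)
    refine h.congr (ae_of_all _ fun y => ?_)
    simp only [toCL_eq]
    exact (hpt ω x y).symm
  · have hG : Integrable (fun y => (ω y : ℂ) / (starRingEnd ℂ) (toC (y - x))) volume := by
      have h := (toCL.integrable_comp hF).const_mul (2 * Real.pi * Complex.I)
      refine h.congr (ae_of_all _ fun y => ?_)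
      simp only [toCL_eq]
      exact (hpt ω x y).symm
    have hπ : ((2 * Real.pi : ℝ) : ℂ) ≠ 0 := by
      exact_mod_cast (by positivity : (2 * Real.pi : ℝ) ≠ 0)
    have hptF : ∀ y : ℝ × ℝ, ω y • K (x - y) =
        vecL ((-(Complex.I / (2 * Real.pi))) * ((ω y : ℂ) / (starRingEnd ℂ) (toC (y - x)))) := by
      intro y
      rw [hpt ω x y]
      have : (-(Complex.I / (2 * Real.pi))) * ((2 * Real.pi * Complex.I) * toC (ω y • K (x - y)))
          = toC (ω y • K (x - y)) := by
        have h2π : (2 * (Real.pi : ℂ)) ≠ 0 := by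
          simpa using Complex.ofReal_ne_zero.mpr Real.pi_ne_zero
        have e : -(Complex.I / (2 * (Real.pi : ℂ))) *
            ((2 * (Real.pi : ℂ) * Complex.I) * toC (ω y • K (x - y)))
            = -(Complex.I * Complex.I) * ((2 * (Real.pi : ℂ)) / (2 * (Real.pi : ℂ))) *
              toC (ω y • K (x - y)) := by ring
        rw [e, div_self h2π, Complex.I_mul_I]
        ring
      rw [this]
      show _ = (Complex.reCLM _, Complex.imCLM _)
      simp only [Complex.reCLM_apply, Complex.imCLM_apply]
      exact (vec_toC _).symm
    calc (∫ y, ω y • K (x - y))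
        = ∫ y, vecL ((-(Complex.I / (2 * Real.pi))) *
            ((ω y : ℂ) / (starRingEnd ℂ) (toC (y - x)))) := by
          congr 1; funext y; exact hptF y
      _ = vecL (∫ y, (-(Complex.I / (2 * Real.pi))) *
            ((ω y : ℂ) / (starRingEnd ℂ) (toC (y - x)))) :=
          ContinuousLinearMap.integral_comp_comm vecL (hG.const_mul _)
      _ = vecL ((-(Complex.I / (2 * Real.pi))) *
            ∫ y, (ω y : ℂ) / (starRingEnd ℂ) (toC (y - x))) := by
          congr 1
          exact integral_smul (-(Complex.I / (2 * (Real.pi : ℂ)))) _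
      _ = -vec ((Complex.I / (2 * Real.pi)) *
            ∫ y, (ω y : ℂ) / (starRingEnd ℂ) (toC (y - x))) := by
          rw [neg_mul, ← vec_neg]
          rfl
end

section
/- For every complex number z that is not an integer, the symmetric partial sums Σ_{n=−N}^{N} 1/(z+n) converge as N → ∞ to π·cot(π z). -/
set_option maxHeartbeats 1000000
open scoped Topology
open Filter Complex Finset

noncomputable def eulerP (N : ℕ) (w : ℂ) : ℂ :=
  (Real.pi : ℂ) * w * ∏ j ∈ Finset.range N, (1 - w ^ 2 / ((j : ℂ) + 1) ^ 2)

lemma sum_Icc_eq (z : ℂ) (N : ℕ) :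
    ∑ n ∈ Finset.Icc (-(N : ℤ)) (N : ℤ), 1 / (z + (n : ℂ)) =
      1 / z + ∑ j ∈ Finset.range N, (1 / (z + ((j : ℂ) + 1)) + 1 / (z - ((j : ℂ) + 1))) := by
  induction N with
  | zero => simp
  | succ N ih =>
    have h1 : Finset.Icc (-((N:ℤ)+1)) ((N:ℤ)+1) =
        insert (-((N:ℤ)+1)) (insert ((N:ℤ)+1) (Finset.Icc (-(N:ℤ)) (N:ℤ))) := by
      ext x; simp only [Finset.mem_Icc, Finset.mem_insert]; omega
    push_cast
    rw [h1, Finset.sum_insert (by simp only [Finset.mem_Icc, Finset.mem_insert]; omega),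
      Finset.sum_insert (by simp only [Finset.mem_Icc]; omega), Finset.sum_range_succ, ih]
    push_cast
    ring

lemma fac_ne (z : ℂ) (hz : ∀ n : ℤ, z ≠ (n : ℂ)) (j : ℕ) :
    (1 : ℂ) - z ^ 2 / ((j : ℂ) + 1) ^ 2 ≠ 0 := by
  have hc : ((j : ℂ) + 1) ≠ 0 := by
    exact Nat.cast_add_one_ne_zero j
  intro h
  have h2 : z ^ 2 = ((j : ℂ) + 1) ^ 2 := by
    have := sub_eq_zero.1 (sub_eq_zero.2 h.symm)
    field_simp at h
    linear_combination -h
  have h3 : (z - ((j : ℂ) + 1)) * (z + ((j : ℂ) + 1)) = 0 := by ring_nf; linear_combination h2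
  rcases mul_eq_zero.1 h3 with h4 | h4
  · exact hz ((j : ℤ) + 1) (by push_cast; linear_combination h4) 
  · exact hz (-((j : ℤ) + 1)) (by push_cast; linear_combination h4)

lemma logDeriv_eulerP (z : ℂ) (hz : ∀ n : ℤ, z ≠ (n : ℂ)) (N : ℕ) :
    logDeriv (eulerP N) z = ∑ n ∈ Finset.Icc (-(N : ℤ)) (N : ℤ), 1 / (z + (n : ℂ)) := by
  have h0 : z ≠ 0 := by simpa using hz 0
  have hπ : (Real.pi : ℂ) ≠ 0 := by exact_mod_cast Real.pi_ne_zero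
  have hder : ∀ j : ℕ, HasDerivAt (fun w : ℂ => 1 - w ^ 2 / ((j:ℂ)+1)^2)
      (-(2 * z / ((j:ℂ)+1)^2)) z := by
    intro j
    have := ((hasDerivAt_pow 2 z).div_const (((j:ℂ)+1)^2)).const_sub 1
    simpa using this
  have hsum : ∑ n ∈ Finset.Icc (-(N : ℤ)) (N : ℤ), 1 / (z + (n : ℂ)) =
      1 / z + ∑ j ∈ Finset.range N, (1 / (z + ((j : ℂ) + 1)) + 1 / (z - ((j : ℂ) + 1))) :=
    sum_Icc_eq z N
  rw [hsum]
  have hstep : logDeriv (eulerP N) z = logDeriv (fun w : ℂ => (Real.pi : ℂ) * w) z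
      + logDeriv (fun w : ℂ => ∏ j ∈ Finset.range N, (1 - w ^ 2 / ((j : ℂ) + 1) ^ 2)) z := by
    apply logDeriv_mul
    · exact mul_ne_zero hπ h0
    · exact Finset.prod_ne_zero_iff.2 fun j _ => fac_ne z hz j
    · fun_prop
    · apply DifferentiableAt.fun_finsetProd
      intro j _
      exact (hder j).differentiableAt
  rw [hstep, logDeriv_const_mul z _ hπ, logDeriv_id']
  congr 1
  rw [logDeriv_prod (fun j _ => fac_ne z hz j) (fun j _ => (hder j).differentiableAt)]
  apply Finset.sum_congr rfl
  intro j _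
  have hc : ((j : ℂ) + 1) ≠ 0 := by exact Nat.cast_add_one_ne_zero j
  have hzp : z + ((j : ℂ) + 1) ≠ 0 := fun h => hz (-((j : ℤ) + 1)) (by push_cast; linear_combination h)
  have hzm : z - ((j : ℂ) + 1) ≠ 0 := fun h => hz ((j : ℤ) + 1) (by push_cast; linear_combination h)
  rw [logDeriv_apply, (hder j).deriv]
  rw [div_eq_iff (fac_ne z hz j)]
  field_simp
  ring


lemma eulerP_tendstoUniformlyOn (R : ℝ) (hR : 1 ≤ R) :
    TendstoUniformlyOn eulerP (fun w => Complex.sin ((Real.pi : ℂ) * w)) atTop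
      (Metric.closedBall (0 : ℂ) R) := by
  have hRpos : (0 : ℝ) < R := lt_of_lt_of_le one_pos hR
  obtain ⟨N₀, hN₀⟩ : ∃ N₀ : ℕ, 2 * R ≤ N₀ := exists_nat_ge (2 * R)
  set s := Metric.closedBall (0 : ℂ) R with hs
  have hXpos : ∀ j : ℕ, (0 : ℝ) < (N₀ : ℝ) + j + 1 := by
    intro j; positivity
  have hX2R : ∀ j : ℕ, 2 * R ≤ (N₀ : ℝ) + j + 1 := by
    intro j
    have : (0:ℝ) ≤ (j:ℝ) := Nat.cast_nonneg j
    linarith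
  -- norm bound on the factor argument
  have hnormw : ∀ w ∈ s, ‖w‖ ≤ R := by
    intro w hw
    rw [hs, Metric.mem_closedBall, dist_zero_right] at hw
    exact hw
  have hcast : ∀ j : ℕ, ((N₀ : ℂ) + j + 1) = ((N₀ + j + 1 : ℕ) : ℂ) := by
    intro j; push_cast; ring
  have hnormX : ∀ j : ℕ, ‖((N₀ : ℂ) + j + 1)‖ = (N₀ : ℝ) + j + 1 := by
    intro j
    rw [hcast j, Complex.norm_natCast]
    push_cast; ring
  have hv_le : ∀ (j : ℕ), ∀ w ∈ s, ‖w ^ 2 / ((N₀ : ℂ) + j + 1) ^ 2‖ ≤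
      R ^ 2 / ((N₀ : ℝ) + j + 1) ^ 2 := by
    intro j w hw
    rw [norm_div, norm_pow, norm_pow, hnormX j]
    apply div_le_div₀ (by positivity) _ (by positivity) le_rfl
    exact pow_le_pow_left₀ (norm_nonneg w) (hnormw w hw) 2
  have hq : ∀ j : ℕ, R ^ 2 / ((N₀ : ℝ) + j + 1) ^ 2 ≤ 1 / 4 := by
    intro j
    rw [div_le_div_iff₀ (by positivity) (by norm_num)]
    nlinarith [hX2R j, hRpos]
  have hv_quarter : ∀ (j : ℕ), ∀ w ∈ s, ‖w ^ 2 / ((N₀ : ℂ) + j + 1) ^ 2‖ ≤ 1 / 4 :=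
    fun j w hw => le_trans (hv_le j w hw) (hq j)
  have hfac_ne : ∀ (j : ℕ), ∀ w ∈ s, (1 : ℂ) - w ^ 2 / ((N₀ : ℂ) + j + 1) ^ 2 ≠ 0 := by
    intro j w hw h
    have h1 : w ^ 2 / ((N₀ : ℂ) + j + 1) ^ 2 = 1 := by linear_combination -h
    have := hv_quarter j w hw
    rw [h1] at this
    norm_num at this
  -- the log series
  set a : ℕ → ℂ → ℂ := fun j w => Complex.log (1 - w ^ 2 / ((N₀ : ℂ) + j + 1) ^ 2) with ha
  set u : ℕ → ℝ := fun j => 2 * (R ^ 2 / ((N₀ : ℝ) + j + 1) ^ 2) with hu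
  have hu_nonneg : ∀ j, 0 ≤ u j := by intro j; positivity
  have hu_sum : Summable u := by
    have h1 : Summable (fun n : ℕ => 1 / ((n : ℝ)) ^ 2) :=
      Real.summable_one_div_nat_pow.2 one_lt_two
    have h2 : Summable (fun j : ℕ => 1 / (((j + (N₀ + 1) : ℕ) : ℝ)) ^ 2) :=
      (summable_nat_add_iff (N₀ + 1)).2 h1
    apply Summable.congr ((h2.mul_left (2 * R ^ 2)))
    intro j
    have : (((j + (N₀ + 1) : ℕ)) : ℝ) = (N₀ : ℝ) + j + 1 := by push_cast; ring
    rw [this]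
    simp only [hu]
    field_simp
  have ha_bound : ∀ (j : ℕ), ∀ w ∈ s, ‖a j w‖ ≤ u j := by
    intro j w hw
    have h1 : ‖-(w ^ 2 / ((N₀ : ℂ) + j + 1) ^ 2)‖ ≤ 1 / 2 := by
      rw [norm_neg]; exact le_trans (hv_quarter j w hw) (by norm_num)
    have h2 := Complex.norm_log_one_add_half_le_self h1
    have h3 : (1 : ℂ) + -(w ^ 2 / ((N₀ : ℂ) + j + 1) ^ 2) =
        1 - w ^ 2 / ((N₀ : ℂ) + j + 1) ^ 2 := by ring
    rw [h3, norm_neg] at h2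
    calc ‖a j w‖ ≤ 3 / 2 * ‖w ^ 2 / ((N₀ : ℂ) + j + 1) ^ 2‖ := h2
      _ ≤ 2 * (R ^ 2 / ((N₀ : ℝ) + j + 1) ^ 2) := by
          have := hv_le j w hw
          nlinarith [norm_nonneg (w ^ 2 / ((N₀ : ℂ) + j + 1) ^ 2)]
  have hS : TendstoUniformlyOn (fun N w => ∑ j ∈ Finset.range N, a j w)
      (fun w => ∑' j, a j w) atTop s := tendstoUniformlyOn_tsum_nat hu_sum ha_bound
  set M : ℝ := ∑' j, u j with hM
  have hSN_bound : ∀ (N : ℕ), ∀ w ∈ s, ‖∑ j ∈ Finset.range N, a j w‖ ≤ M := by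
    intro N w hw
    calc ‖∑ j ∈ Finset.range N, a j w‖ ≤ ∑ j ∈ Finset.range N, ‖a j w‖ := norm_sum_le _ _
      _ ≤ ∑ j ∈ Finset.range N, u j := Finset.sum_le_sum fun j _ => ha_bound j w hw
      _ ≤ M := Summable.sum_le_tsum _ (fun j _ => hu_nonneg j) hu_sum
  have hS_bound : ∀ w ∈ s, ‖∑' j, a j w‖ ≤ M := by
    intro w hw
    have hsa : Summable (fun j => ‖a j w‖) :=
      Summable.of_nonneg_of_le (fun j => norm_nonneg _) (fun j => ha_bound j w hw) hu_sum
    calc ‖∑' j, a j w‖ ≤ ∑' j, ‖a j w‖ := norm_tsum_le_tsum_norm hsa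
      _ ≤ M := Summable.tsum_le_tsum (fun j => ha_bound j w hw) hsa hu_sum
  have hM0 : (0:ℝ) ≤ M := tsum_nonneg hu_nonneg
  -- exponential step
  have hexp_lip : ∀ A B : ℂ, ‖A‖ ≤ M → ‖A - B‖ ≤ 1 →
      ‖Complex.exp A - Complex.exp B‖ ≤ 2 * Real.exp M * ‖A - B‖ := by
    intro A B hA hAB
    have h1 : Complex.exp A - Complex.exp B = Complex.exp A * (1 - Complex.exp (B - A)) := by
      rw [mul_sub, mul_one, ← Complex.exp_add]
      ring_nf
    rw [h1, norm_mul]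
    have h2 : ‖(1 : ℂ) - Complex.exp (B - A)‖ ≤ 2 * ‖B - A‖ := by
      rw [norm_sub_rev]
      simpa using Complex.norm_exp_sub_one_le (x := B - A) (by rw [norm_sub_rev]; exact hAB)
    have h3 : ‖Complex.exp A‖ ≤ Real.exp M := by
      rw [Complex.norm_exp]
      exact Real.exp_le_exp.2 (le_trans (Complex.re_le_norm A) hA)
    calc ‖Complex.exp A‖ * ‖(1:ℂ) - Complex.exp (B - A)‖
        ≤ Real.exp M * (2 * ‖B - A‖) := by
          apply mul_le_mul h3 h2 (norm_nonneg _) (Real.exp_nonneg M)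
      _ = 2 * Real.exp M * ‖A - B‖ := by rw [norm_sub_rev]; ring
  have hexp : TendstoUniformlyOn (fun N w => Complex.exp (∑ j ∈ Finset.range N, a j w))
      (fun w => Complex.exp (∑' j, a j w)) atTop s := by
    rw [Metric.tendstoUniformlyOn_iff] at hS ⊢
    intro ε hε
    have hd : (0:ℝ) < min 1 (ε / (2 * Real.exp M + 1)) := by
      apply lt_min one_pos
      positivity
    filter_upwards [hS _ hd] with N hN w hw
    have h1 := hN w hw
    rw [dist_eq_norm] at h1 ⊢
    have h2 : ‖∑' j, a j w - ∑ j ∈ Finset.range N, a j w‖ ≤ 1 :=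
      le_trans h1.le (min_le_left _ _)
    have h3 := hexp_lip _ _ (hS_bound w hw) h2
    have h4 : ‖∑' j, a j w - ∑ j ∈ Finset.range N, a j w‖ < ε / (2 * Real.exp M + 1) :=
      lt_of_lt_of_le h1 (min_le_right _ _)
    have h5 : (0:ℝ) < 2 * Real.exp M + 1 := by positivity
    calc ‖Complex.exp (∑' j, a j w) - Complex.exp (∑ j ∈ Finset.range N, a j w)‖
        ≤ 2 * Real.exp M * ‖∑' j, a j w - ∑ j ∈ Finset.range N, a j w‖ := h3
      _ < ε := by
          have h6 := (lt_div_iff₀ h5).1 h4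
          nlinarith [norm_nonneg (∑' j, a j w - ∑ j ∈ Finset.range N, a j w)]
  -- bound on the head
  have hcont : Continuous (eulerP N₀) := by
    unfold eulerP
    apply Continuous.mul (by fun_prop)
    apply continuous_finset_prod
    intro j _
    fun_prop
  obtain ⟨C, hC⟩ := (isCompact_closedBall (0:ℂ) R).exists_bound_of_continuousOn
    hcont.continuousOn
  set C' : ℝ := max C 1 with hC'
  have hC'pos : (0:ℝ) < C' := lt_of_lt_of_le one_pos (le_max_right _ _)
  have hC'bound : ∀ w ∈ s, ‖eulerP N₀ w‖ ≤ C' := fun w hw =>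
    le_trans (hC w hw) (le_max_left _ _)
  -- multiply by the head
  have hmul : TendstoUniformlyOn
      (fun N w => eulerP N₀ w * Complex.exp (∑ j ∈ Finset.range N, a j w))
      (fun w => eulerP N₀ w * Complex.exp (∑' j, a j w)) atTop s := by
    rw [Metric.tendstoUniformlyOn_iff] at hexp ⊢
    intro ε hε
    filter_upwards [hexp (ε / C') (by positivity)] with N hN w hw
    have h1 := hN w hw
    rw [dist_eq_norm] at h1 ⊢
    rw [← mul_sub, norm_mul]
    calc ‖eulerP N₀ w‖ * ‖Complex.exp (∑' j, a j w) -
          Complex.exp (∑ j ∈ Finset.range N, a j w)‖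
        ≤ C' * ‖Complex.exp (∑' j, a j w) - Complex.exp (∑ j ∈ Finset.range N, a j w)‖ := by
          apply mul_le_mul_of_nonneg_right (hC'bound w hw) (norm_nonneg _)
      _ < C' * (ε / C') := by
          apply mul_lt_mul_of_pos_left h1 hC'pos
      _ = ε := by field_simp
  -- identification with the shifted product
  have heq : ∀ N : ℕ, Set.EqOn
      (fun w => eulerP N₀ w * Complex.exp (∑ j ∈ Finset.range N, a j w))
      (eulerP (N₀ + N)) s := by
    intro N w hw
    simp only
    rw [Complex.exp_sum]
    have h1 : ∀ j ∈ Finset.range N, Complex.exp (a j w) =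
        1 - w ^ 2 / ((N₀ : ℂ) + j + 1) ^ 2 := fun j _ =>
      Complex.exp_log (hfac_ne j w hw)
    rw [Finset.prod_congr rfl h1]
    unfold eulerP
    rw [Finset.prod_range_add, ← mul_assoc]
    congr 1
    apply Finset.prod_congr rfl
    intro j _
    push_cast
    ring
  have hshift : TendstoUniformlyOn (fun N => eulerP (N₀ + N))
      (fun w => eulerP N₀ w * Complex.exp (∑' j, a j w)) atTop s :=
    hmul.congr (Eventually.of_forall heq)
  -- the limit is sin
  have hglim : Set.EqOn (fun w => eulerP N₀ w * Complex.exp (∑' j, a j w))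
      (fun w => Complex.sin ((Real.pi : ℂ) * w)) s := by
    intro w hw
    have h1 : Tendsto (fun N : ℕ => N₀ + N) atTop atTop := by
      simpa [add_comm] using tendsto_add_atTop_nat N₀
    have h2 : Tendsto (fun N => eulerP (N₀ + N) w) atTop
        (𝓝 (Complex.sin ((Real.pi : ℂ) * w))) := by
      have h3 := Complex.tendsto_euler_sin_prod w
      exact (h3.comp h1)
    exact tendsto_nhds_unique (hshift.tendsto_at hw) h2
  have hshift2 : TendstoUniformlyOn (fun N => eulerP (N₀ + N))
      (fun w => Complex.sin ((Real.pi : ℂ) * w)) atTop s :=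
    hshift.congr_right hglim
  -- remove the shift
  have hmap : Filter.map (fun N : ℕ => N₀ + N) atTop = atTop := by
    simpa [add_comm] using Filter.map_add_atTop_eq_nat N₀
  intro U hU
  have h1 : ∀ᶠ N in atTop, ∀ x ∈ s,
      (Complex.sin ((Real.pi : ℂ) * x), eulerP (N₀ + N) x) ∈ U := hshift2 U hU
  have h2 : ∀ᶠ N in atTop, ∀ x ∈ s,
      (Complex.sin ((Real.pi : ℂ) * x), eulerP N x) ∈ U := by
    rw [← hmap, eventually_map]
    exact h1
  exact h2

/-- For `z` not an integer, the symmetric partial sums `∑_{n=-N}^{N} 1/(z+n)` converge to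
`π cot (π z)` as `N → ∞`. -/
theorem stmt5 (z : ℂ) (hz : ∀ n : ℤ, z ≠ (n : ℂ)) :
    Filter.Tendsto (fun N : ℕ => ∑ n ∈ Finset.Icc (-(N : ℤ)) (N : ℤ), 1 / (z + (n : ℂ)))
      Filter.atTop (nhds ((Real.pi : ℂ) * Complex.cot (Real.pi * z))) := by
  have hR : (1:ℝ) ≤ ‖z‖ + 1 := by linarith [norm_nonneg z]
  have hzmem : z ∈ Metric.ball (0:ℂ) (‖z‖ + 1) := by
    rw [Metric.mem_ball, dist_zero_right]
    linarith
  have htlu : TendstoLocallyUniformlyOn eulerP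
      (fun w => Complex.sin ((Real.pi : ℂ) * w)) atTop (Metric.ball (0:ℂ) (‖z‖ + 1)) :=
    ((eulerP_tendstoUniformlyOn (‖z‖ + 1) hR).mono
      Metric.ball_subset_closedBall).tendstoLocallyUniformlyOn
  have hπ : (Real.pi : ℂ) ≠ 0 := by exact_mod_cast Real.pi_ne_zero
  have hsin_ne : Complex.sin ((Real.pi : ℂ) * z) ≠ 0 := by
    rw [Complex.sin_ne_zero_iff]
    intro k h
    apply hz k
    have h2 : (Real.pi : ℂ) * z = (Real.pi : ℂ) * k := by rw [h]; ring
    exact mul_left_cancel₀ hπ h2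
  have hdiff : ∀ N : ℕ, DifferentiableOn ℂ (eulerP N) (Metric.ball (0:ℂ) (‖z‖ + 1)) := by
    intro N
    apply Differentiable.differentiableOn
    unfold eulerP
    apply Differentiable.mul (by fun_prop)
    apply Differentiable.fun_finsetProd
    intro j _
    fun_prop
  have hmain := Complex.logDeriv_tendsto (f := eulerP)
    (g := fun w => Complex.sin ((Real.pi : ℂ) * w)) Metric.isOpen_ball
    hzmem
    htlu (Filter.Eventually.of_forall hdiff) hsin_ne
  have hld : logDeriv (fun w => Complex.sin ((Real.pi : ℂ) * w)) z =
      (Real.pi : ℂ) * Complex.cot ((Real.pi : ℂ) * z) := by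
    have h1 : (fun w : ℂ => Complex.sin ((Real.pi : ℂ) * w)) =
        Complex.sin ∘ (fun w : ℂ => (Real.pi : ℂ) * w) := rfl
    rw [h1, logDeriv_comp (Complex.differentiable_sin _) (by fun_prop)]
    rw [Complex.logDeriv_sin]
    have h2 : deriv (fun w : ℂ => (Real.pi : ℂ) * w) z = (Real.pi : ℂ) := by
      simpa using ((hasDerivAt_id z).const_mul ((Real.pi : ℂ))).deriv
    rw [h2]
    ring
  rw [hld] at hmain
  exact hmain.congr (fun N => logDeriv_eulerP z hz N)
end

section
/- For every x ∈ ℝ² ∖ L and every y ∈ ℝ², the symmetric partial sums Σ_{n=−N}^{N} ((x+(n,0))/|x+(n,0)|²) · y converge as N → ∞ to π · vec(cot(π · conj(⟵x))) · y. -/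
/-- The Euclidean inner product on `ℝ²`. -/
def dot (v w : ℝ × ℝ) : ℝ := v.1 * w.1 + v.2 * w.2

open Filter Finset
open scoped Real Topology

namespace Stmt6Aux

/-- Partial Euler sine products. -/
noncomputable def P (N : ℕ) (z : ℂ) : ℂ :=
  (Real.pi : ℂ) * z * ∏ j ∈ Finset.range N, (1 - z ^ 2 / ((j : ℂ) + 1) ^ 2)

lemma P_differentiable (N : ℕ) : Differentiable ℂ (P N) := by
  apply Differentiable.mul
  · exact (differentiable_const _).mul differentiable_id
  · intro z
    exact DifferentiableAt.fun_finsetProd fun j _ => by fun_prop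

lemma unif_cexp {F : ℕ → ℂ → ℂ} {g : ℂ → ℂ} {s : Set ℂ} {C : ℝ}
    (hF : TendstoUniformlyOn F g atTop s) (hg : ∀ z ∈ s, ‖g z‖ ≤ C) :
    TendstoUniformlyOn (fun N z => Complex.exp (F N z)) (fun z => Complex.exp (g z)) atTop s := by
  rw [Metric.tendstoUniformlyOn_iff] at hF ⊢
  intro ε hε
  have hexp : (0:ℝ) < Real.exp C := Real.exp_pos C
  set δ : ℝ := min 1 (ε / (2 * Real.exp C + 1)) with hδdef
  have hδ0 : 0 < δ := lt_min one_pos (div_pos hε (by positivity))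
  filter_upwards [hF δ hδ0] with N hN z hz
  have h1 : dist (g z) (F N z) < δ := hN z hz
  have hdn : ‖F N z - g z‖ < δ := by rwa [dist_eq_norm'] at h1
  have hδ1 : δ ≤ 1 := min_le_left _ _
  have key : Complex.exp (g z) - Complex.exp (F N z)
      = Complex.exp (g z) * (1 - Complex.exp (F N z - g z)) := by
    rw [mul_sub, mul_one, ← Complex.exp_add]
    ring_nf
  rw [dist_eq_norm, key, norm_mul]
  have h2 : ‖Complex.exp (g z)‖ ≤ Real.exp C := by
    rw [Complex.norm_exp]
    apply Real.exp_le_exp.2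
    calc (g z).re ≤ |(g z).re| := le_abs_self _
      _ ≤ ‖g z‖ := Complex.abs_re_le_norm _
      _ ≤ C := by exact hg z hz
  have h3 : ‖1 - Complex.exp (F N z - g z)‖ ≤ 2 * ‖F N z - g z‖ := by
    rw [norm_sub_rev]
    exact Complex.norm_exp_sub_one_le (le_trans hdn.le hδ1)
  calc ‖Complex.exp (g z)‖ * ‖1 - Complex.exp (F N z - g z)‖
      ≤ Real.exp C * (2 * ‖F N z - g z‖) := by
        apply mul_le_mul h2 h3 (norm_nonneg _) hexp.le
    _ < Real.exp C * (2 * δ) := by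
        have h4 : 0 < 2 * ‖F N z - g z‖ + 1 := by positivity
        apply mul_lt_mul_of_pos_left _ hexp
        linarith
    _ ≤ ε := by
        have h5 : δ ≤ ε / (2 * Real.exp C + 1) := min_le_right _ _
        have h6 : Real.exp C * (2 * δ) ≤ (2 * Real.exp C + 1) * (ε / (2 * Real.exp C + 1)) := by
          have : Real.exp C * (2 * δ) ≤ (2 * Real.exp C) * (ε / (2 * Real.exp C + 1)) := by
            have := mul_le_mul_of_nonneg_left h5 (by positivity : (0:ℝ) ≤ 2 * Real.exp C)
            linarith
          nlinarith [div_nonneg hε.le (by positivity : (0:ℝ) ≤ 2 * Real.exp C + 1)]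
        have h7 : (2 * Real.exp C + 1) * (ε / (2 * Real.exp C + 1)) = ε := by
          field_simp
        linarith

lemma unif_const_mul {Q : ℂ → ℂ} {F : ℕ → ℂ → ℂ} {g : ℂ → ℂ} {s : Set ℂ} {C : ℝ}
    (hQ : ∀ z ∈ s, ‖Q z‖ ≤ C)
    (hF : TendstoUniformlyOn F g atTop s) :
    TendstoUniformlyOn (fun N z => Q z * F N z) (fun z => Q z * g z) atTop s := by
  rw [Metric.tendstoUniformlyOn_iff] at hF ⊢
  intro ε hε
  rcases Set.eq_empty_or_nonempty s with hs | ⟨z₀, hz₀⟩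
  · filter_upwards with N z hz
    rw [hs] at hz; exact absurd hz (Set.notMem_empty z)
  have hC0 : 0 ≤ C := le_trans (norm_nonneg _) (hQ z₀ hz₀)
  have hδ0 : 0 < ε / (C + 1) := by positivity
  filter_upwards [hF _ hδ0] with N hN z hz
  have h1 : ‖g z - F N z‖ < ε / (C + 1) := by rw [← dist_eq_norm]; exact hN z hz
  rw [dist_eq_norm, ← mul_sub, norm_mul]
  calc ‖Q z‖ * ‖g z - F N z‖ ≤ C * ‖g z - F N z‖ :=
        mul_le_mul_of_nonneg_right (hQ z hz) (norm_nonneg _)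
    _ ≤ C * (ε / (C + 1)) := mul_le_mul_of_nonneg_left h1.le hC0
    _ < ε := by
        rw [mul_div_assoc']
        rw [div_lt_iff₀ (by positivity)]
        nlinarith

/-- Uniform convergence of Euler partial products to sine on closed balls. -/
lemma P_tendstoUniformlyOn (R : ℝ) (hR : 1 ≤ R) :
    TendstoUniformlyOn P (fun z => Complex.sin ((Real.pi : ℂ) * z)) atTop
      (Metric.closedBall (0:ℂ) R) := by
  set s : Set ℂ := Metric.closedBall (0:ℂ) R with hsdef
  set m : ℕ := ⌈2 * R⌉₊ with hmdef
  have hm : 2 * R ≤ m := Nat.le_ceil _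
  have hR0 : 0 < R := lt_of_lt_of_le one_pos hR
  -- basic estimate on the small factors
  have hsmall : ∀ n : ℕ, m ≤ n → ∀ z ∈ s, ‖z ^ 2 / ((n : ℂ) + 1) ^ 2‖ ≤ R^2 / ((n:ℝ)+1)^2 := by
    intro n hn z hz
    have hz' : ‖z‖ ≤ R := by simpa [hsdef, Metric.mem_closedBall, dist_eq_norm] using hz
    have hd : ‖((n : ℂ) + 1)‖ = (n:ℝ) + 1 := by
      rw [show ((n:ℂ) + 1) = (((n:ℝ) + 1 : ℝ) : ℂ) by push_cast; ring]
      rw [Complex.norm_of_nonneg (by positivity)]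
    rw [norm_div, norm_pow, norm_pow, hd]
    apply div_le_div₀ (by positivity) _ (by positivity) le_rfl
    exact pow_le_pow_left₀ (norm_nonneg _) hz' 2
  have hquarter : ∀ n : ℕ, m ≤ n → R^2 / ((n:ℝ)+1)^2 ≤ 1/4 := by
    intro n hn
    have hmn : (m:ℝ) ≤ (n:ℝ) := Nat.cast_le.2 hn
    have h2R : 2 * R ≤ (n:ℝ) + 1 := by linarith
    rw [div_le_iff₀ (by positivity)]
    nlinarith
  -- the log-summands
  set h : ℕ → ℂ → ℂ := fun n z =>
    if n < m then 0 else Complex.log (1 - z ^ 2 / ((n : ℂ) + 1) ^ 2) with hhdef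
  set u : ℕ → ℝ := fun n => if n < m then 0 else (3/2) * (R^2 / ((n:ℝ)+1)^2) with hudef
  have hu : Summable u := by
    have hmaj : Summable (fun n : ℕ => (3/2) * R^2 * (1 / ((n:ℝ)+1)^2)) := by
      apply Summable.mul_left
      have h1 : Summable (fun n : ℕ => 1 / ((n:ℝ))^2) := Real.summable_one_div_nat_pow.2 one_lt_two
      have h2 := (summable_nat_add_iff 1).2 h1
      apply h2.congr
      intro n; push_cast; ring_nf
    refine Summable.of_nonneg_of_le (fun n => ?_) (fun n => ?_) hmaj
    · by_cases hn : n < m <;> simp [hudef, hn] <;> positivity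
    · by_cases hn : n < m
      · simp [hudef, hn]; positivity
      · simp only [hudef, hn, if_false]
        apply le_of_eq; ring
  have hle : ∀ n : ℕ, ∀ z ∈ s, ‖h n z‖ ≤ u n := by
    intro n z hz
    by_cases hn : n < m
    · simp [hhdef, hudef, hn]
    · push_neg at hn
      simp only [hhdef, hudef, if_neg (not_lt.2 hn)]
      have h1 := hsmall n hn z hz
      have h2 := hquarter n hn
      have h3 : ‖-(z ^ 2 / ((n : ℂ) + 1) ^ 2)‖ ≤ 1/2 := by
        rw [norm_neg]; linarith
      have := Complex.norm_log_one_add_half_le_self h3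
      rw [show (1 : ℂ) + -(z ^ 2 / ((n : ℂ) + 1) ^ 2) = 1 - z ^ 2 / ((n : ℂ) + 1) ^ 2 by ring]
        at this
      rw [norm_neg] at this
      calc ‖Complex.log (1 - z ^ 2 / ((n : ℂ) + 1) ^ 2)‖
          ≤ 3/2 * ‖z ^ 2 / ((n : ℂ) + 1) ^ 2‖ := this
        _ ≤ 3/2 * (R^2 / ((n:ℝ)+1)^2) := by linarith
  -- M-test
  have hMtest := tendstoUniformlyOn_tsum_nat hu (s := s) hle
  -- bound on tsum
  set C : ℝ := ∑' n, u n with hCdef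
  have hgbound : ∀ z ∈ s, ‖∑' n, h n z‖ ≤ C := by
    intro z hz
    have hsn : Summable (fun n => ‖h n z‖) :=
      Summable.of_nonneg_of_le (fun n => norm_nonneg _) (fun n => hle n z hz) hu
    calc ‖∑' n, h n z‖ ≤ ∑' n, ‖h n z‖ := norm_tsum_le_tsum_norm hsn
      _ ≤ C := Summable.tsum_le_tsum (fun n => hle n z hz) hsn hu
  have hexp := unif_cexp hMtest hgbound
  -- the fixed head factor
  set Q : ℂ → ℂ := fun z => (Real.pi : ℂ) * z * ∏ j ∈ Finset.range m, (1 - z ^ 2 / ((j : ℂ) + 1) ^ 2)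
    with hQdef
  obtain ⟨CQ, hCQ⟩ : ∃ CQ, ∀ z ∈ s, ‖Q z‖ ≤ CQ := by
    have hcont : ContinuousOn Q s := by
      apply Continuous.continuousOn
      apply Continuous.mul
      · fun_prop
      · apply continuous_finset_prod
        intro j _; fun_prop
    obtain ⟨CQ, hCQ⟩ := (isCompact_closedBall _ _).exists_bound_of_continuousOn hcont
    exact ⟨CQ, hCQ⟩
  have hmul := unif_const_mul hCQ hexp
  -- nonvanishing of tail factors
  have hne : ∀ n : ℕ, m ≤ n → ∀ z ∈ s, (1 : ℂ) - z ^ 2 / ((n : ℂ) + 1) ^ 2 ≠ 0 := by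
    intro n hn z hz h0
    have h1 := hsmall n hn z hz
    have h2 := hquarter n hn
    have : (1:ℂ) = z ^ 2 / ((n : ℂ) + 1) ^ 2 := by linear_combination h0
    have h3 : ‖(1:ℂ)‖ ≤ 1/4 := by rw [this]; linarith
    norm_num at h3
  -- eventual equality of the two sequences on s
  have hcong : ∀ᶠ N in atTop, Set.EqOn (fun z => Q z * Complex.exp (∑ n ∈ Finset.range N, h n z))
      (P N) s := by
    filter_upwards [eventually_ge_atTop m] with N hNm z hz
    have hsum : ∑ n ∈ Finset.range N, h n z
        = ∑ n ∈ Finset.Ico m N, Complex.log (1 - z ^ 2 / ((n : ℂ) + 1) ^ 2) := by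
      rw [← Finset.sum_range_add_sum_Ico _ hNm]
      have h1 : ∑ n ∈ Finset.range m, h n z = 0 :=
        Finset.sum_eq_zero fun n hn => by simp [hhdef, Finset.mem_range.1 hn]
      have h2 : ∑ n ∈ Finset.Ico m N, h n z
          = ∑ n ∈ Finset.Ico m N, Complex.log (1 - z ^ 2 / ((n : ℂ) + 1) ^ 2) :=
        Finset.sum_congr rfl fun n hn => by
          simp [hhdef, not_lt.2 (Finset.mem_Ico.1 hn).1]
      rw [h1, h2, zero_add]
    have hprod : Complex.exp (∑ n ∈ Finset.Ico m N, Complex.log (1 - z ^ 2 / ((n : ℂ) + 1) ^ 2))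
        = ∏ n ∈ Finset.Ico m N, (1 - z ^ 2 / ((n : ℂ) + 1) ^ 2) := by
      rw [Complex.exp_sum]
      exact Finset.prod_congr rfl fun n hn =>
        Complex.exp_log (hne n (Finset.mem_Ico.1 hn).1 z hz)
    show Q z * Complex.exp (∑ n ∈ Finset.range N, h n z) = P N z
    rw [hsum, hprod]
    simp only [hQdef, P]
    rw [mul_assoc ((Real.pi:ℂ) * z), Finset.prod_range_mul_prod_Ico _ hNm]
  have hTU : TendstoUniformlyOn P (fun z => Q z * Complex.exp (∑' n, h n z)) atTop s :=
    hmul.congr hcong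
  -- identify the limit with sine
  apply hTU.congr_right
  intro z hz
  have h1 : Tendsto (fun N => P N z) atTop (𝓝 (Q z * Complex.exp (∑' n, h n z))) :=
    hTU.tendsto_at hz
  have h2 : Tendsto (fun N => P N z) atTop (𝓝 (Complex.sin ((Real.pi : ℂ) * z))) :=
    Complex.tendsto_euler_sin_prod z
  exact tendsto_nhds_unique h1 h2

/-- The cotangent expansion: symmetric sums of `(w+n)⁻¹` converge to `π cot (π w)`. -/
lemma cot_expansion {w : ℂ} (hw : ∀ n : ℤ, w ≠ (n : ℂ)) :
    Tendsto (fun N : ℕ => ∑ n ∈ Finset.Icc (-(N:ℤ)) (N:ℤ), (w + (n:ℂ))⁻¹) atTop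
      (𝓝 ((Real.pi : ℂ) * Complex.cot ((Real.pi : ℂ) * w))) := by
  have hw0 : w ≠ 0 := by simpa using hw 0
  have hwpm : ∀ j : ℕ, w ^ 2 - ((j:ℂ)+1)^2 ≠ 0 := by
    intro j h0
    have h1 : (w - ((j:ℂ)+1)) * (w + ((j:ℂ)+1)) = 0 := by linear_combination h0
    rcases mul_eq_zero.1 h1 with h | h
    · exact hw (j+1) (by push_cast; linear_combination h)
    · exact hw (-(j+1)) (by push_cast; linear_combination h)
  have hfac : ∀ j : ℕ, (1:ℂ) - w ^ 2 / ((j:ℂ)+1)^2 ≠ 0 := by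
    intro j h0
    have hj : ((j:ℂ)+1)^2 ≠ 0 := by
      intro h; apply hwpm j; rw [h] at h0 ⊢; simpa using h0
    apply hwpm j
    field_simp at h0
    linear_combination -h0
  set R : ℝ := ‖w‖ + 1 with hRdef
  have hR : 1 ≤ R := hRdef ▸ le_add_of_nonneg_left (norm_nonneg w)
  have hws : w ∈ Metric.ball (0:ℂ) R := by
    simp [hRdef, Metric.mem_ball, dist_eq_norm]
  have hTLU : TendstoLocallyUniformlyOn P (fun z => Complex.sin ((Real.pi : ℂ) * z)) atTop
      (Metric.ball (0:ℂ) R) :=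
    ((P_tendstoUniformlyOn R hR).mono Metric.ball_subset_closedBall).tendstoLocallyUniformlyOn
  have hdiff : ∀ᶠ N in atTop, DifferentiableOn ℂ (P N) (Metric.ball (0:ℂ) R) :=
    Eventually.of_forall fun N => (P_differentiable N).differentiableOn
  have hsin : Complex.sin ((Real.pi : ℂ) * w) ≠ 0 := by
    rw [Complex.sin_ne_zero_iff]
    intro k hk
    apply hw k
    have hπ : (Real.pi : ℂ) ≠ 0 := Complex.ofReal_ne_zero.2 Real.pi_ne_zero
    apply mul_left_cancel₀ hπ
    rw [hk]; ring
  have hmain := Complex.logDeriv_tendsto (f := P) (g := fun z => Complex.sin ((Real.pi : ℂ) * z))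
    Metric.isOpen_ball hws hTLU hdiff hsin
  -- compute logDeriv of the limit
  have hlim : logDeriv (fun z => Complex.sin ((Real.pi : ℂ) * z)) w
      = (Real.pi : ℂ) * Complex.cot ((Real.pi : ℂ) * w) := by
    have hd : HasDerivAt (fun z => Complex.sin ((Real.pi : ℂ) * z))
        (Complex.cos ((Real.pi : ℂ) * w) * (Real.pi : ℂ)) w := by
      have h1 : HasDerivAt (fun z : ℂ => (Real.pi : ℂ) * z) ((Real.pi : ℂ) * 1) w :=
        (hasDerivAt_id w).const_mul _
      rw [mul_one] at h1
      exact (Complex.hasDerivAt_sin ((Real.pi : ℂ) * w)).comp w h1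
    rw [logDeriv_apply, hd.deriv, Complex.cot_eq_cos_div_sin]
    ring
  -- compute logDeriv of the partial products
  have hP : ∀ N, logDeriv (P N) w
      = w⁻¹ + ∑ j ∈ Finset.range N, 2 * w / (w ^ 2 - ((j:ℂ)+1)^2) := by
    intro N
    have hfd : ∀ j : ℕ, HasDerivAt (fun z : ℂ => 1 - z ^ 2 / ((j:ℂ)+1)^2)
        (-(2 * w / ((j:ℂ)+1)^2)) w := by
      intro j
      have := ((hasDerivAt_pow 2 w).div_const (((j:ℂ)+1)^2)).const_sub 1
      simpa [pow_one, mul_div_assoc] using this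
    have hj0 : ∀ j : ℕ, ((j:ℂ)+1)^2 ≠ 0 := by
      intro j
      apply pow_ne_zero
      rw [show ((j:ℂ)+1) = ((j+1 : ℕ) : ℂ) by push_cast; ring]
      exact Nat.cast_ne_zero.2 (Nat.succ_ne_zero j)
    have step1 : logDeriv (P N) w
        = logDeriv (fun z : ℂ => z * ∏ j ∈ Finset.range N, (1 - z ^ 2 / ((j:ℂ)+1)^2)) w := by
      have : P N = fun z => (Real.pi : ℂ) *
          (z * ∏ j ∈ Finset.range N, (1 - z ^ 2 / ((j:ℂ)+1)^2)) := by
        funext z; simp only [P]; ring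
      rw [this, logDeriv_const_mul _ _ (Complex.ofReal_ne_zero.2 Real.pi_ne_zero)]
    have hprodne : ∏ j ∈ Finset.range N, (1 - w ^ 2 / ((j:ℂ)+1)^2) ≠ 0 :=
      Finset.prod_ne_zero_iff.2 fun j _ => hfac j
    have hproddiff : DifferentiableAt ℂ
        (fun z : ℂ => ∏ j ∈ Finset.range N, (1 - z ^ 2 / ((j:ℂ)+1)^2)) w :=
      DifferentiableAt.fun_finsetProd fun j _ => by fun_prop
    have step2 : logDeriv (fun z : ℂ => z * ∏ j ∈ Finset.range N, (1 - z ^ 2 / ((j:ℂ)+1)^2)) w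
        = logDeriv (fun z : ℂ => z) w
          + logDeriv (fun z : ℂ => ∏ j ∈ Finset.range N, (1 - z ^ 2 / ((j:ℂ)+1)^2)) w :=
      logDeriv_mul w hw0 hprodne differentiableAt_fun_id hproddiff
    have step3 : logDeriv (fun z : ℂ => ∏ j ∈ Finset.range N, (1 - z ^ 2 / ((j:ℂ)+1)^2)) w
        = ∑ j ∈ Finset.range N, logDeriv (fun z : ℂ => 1 - z ^ 2 / ((j:ℂ)+1)^2) w :=
      logDeriv_prod (fun j _ => hfac j) (fun j _ => by fun_prop)
    have step4 : ∀ j : ℕ, logDeriv (fun z : ℂ => 1 - z ^ 2 / ((j:ℂ)+1)^2) w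
        = 2 * w / (w ^ 2 - ((j:ℂ)+1)^2) := by
      intro j
      rw [logDeriv_apply, (hfd j).deriv]
      rw [div_eq_div_iff (hfac j) (hwpm j)]
      field_simp [hj0 j]
      ring
    rw [step1, step2, step3, logDeriv_id']
    rw [Finset.sum_congr rfl fun j _ => step4 j]
    rw [one_div]
  -- the symmetric-sum identity
  have hicc : ∀ N : ℕ, ∑ n ∈ Finset.Icc (-(N:ℤ)) (N:ℤ), (w + (n:ℂ))⁻¹
      = w⁻¹ + ∑ j ∈ Finset.range N, 2 * w / (w ^ 2 - ((j:ℂ)+1)^2) := by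
    intro N
    induction N with
    | zero => simp
    | succ N ih =>
        have hins : Finset.Icc (-(N+1:ℤ)) ((N:ℤ)+1)
            = insert (-(N+1:ℤ)) (insert ((N:ℤ)+1) (Finset.Icc (-(N:ℤ)) (N:ℤ))) := by
          ext k
          simp only [Finset.mem_Icc, Finset.mem_insert]
          omega
        have h1 : ((N:ℤ)+1) ∉ Finset.Icc (-(N:ℤ)) (N:ℤ) := by
          simp only [Finset.mem_Icc]; omega
        have h2 : (-(N+1:ℤ)) ∉ insert ((N:ℤ)+1) (Finset.Icc (-(N:ℤ)) (N:ℤ)) := by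
          simp only [Finset.mem_insert, Finset.mem_Icc]; omega
        have hNcast : (-((N:ℤ)+1) : ℤ) = -(N+1:ℤ) := by ring
        rw [show (-(((N+1):ℕ):ℤ)) = -(N+1:ℤ) by push_cast; ring,
            show ((((N+1):ℕ)):ℤ) = (N:ℤ)+1 by push_cast; ring]
        rw [hins, Finset.sum_insert h2, Finset.sum_insert h1, ih, Finset.sum_range_succ]
        have hne1 : w - ((N:ℂ)+1) ≠ 0 := by
          intro h; exact hw (N+1) (by push_cast; linear_combination h)
        have hne2 : w + ((N:ℂ)+1) ≠ 0 := by
          intro h; exact hw (-(N+1)) (by push_cast; linear_combination h)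
        have hc : (w - ((N:ℂ)+1))⁻¹ + (w + ((N:ℂ)+1))⁻¹ = 2 * w / (w ^ 2 - ((N:ℂ)+1)^2) := by
          rw [show w ^ 2 - ((N:ℂ)+1)^2 = (w - ((N:ℂ)+1)) * (w + ((N:ℂ)+1)) by ring]
          field_simp
          ring
        have hca : w + ((-(N+1:ℤ) : ℤ) : ℂ) = w - ((N:ℂ)+1) := by push_cast; ring
        have hcb : w + (((N:ℤ)+1 : ℤ) : ℂ) = w + ((N:ℂ)+1) := by push_cast; ring
        rw [hca, hcb]
        linear_combination hc
  -- conclude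
  rw [hlim] at hmain
  apply hmain.congr
  intro N
  rw [hP N, ← hicc N]

end Stmt6Aux

/-- For `x ∉ L = ℤ × {0}` and any `y`, the symmetric partial sums
`∑_{n=-N}^{N} ((x+(n,0))/|x+(n,0)|²) · y` converge to `π vec(cot(π conj(⟵x))) · y`. -/
theorem stmt6 (x : ℝ × ℝ) (hx : ∀ n : ℤ, x ≠ ((n : ℝ), 0)) (y : ℝ × ℝ) :
    Filter.Tendsto
      (fun N : ℕ => ∑ n ∈ Finset.Icc (-(N : ℤ)) (N : ℤ),
        dot (((x + ((n : ℝ), 0)).1 ^ 2 + (x + ((n : ℝ), 0)).2 ^ 2)⁻¹ • (x + ((n : ℝ), 0))) y)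
      Filter.atTop
      (nhds (Real.pi * dot (vec (Complex.cot (Real.pi * (starRingEnd ℂ) (toC x)))) y)) := by
  set w : ℂ := (starRingEnd ℂ) (toC x) with hwdef
  have hwre : w.re = x.1 := by simp [hwdef, toC]
  have hwim : w.im = -x.2 := by simp [hwdef, toC]
  have hw : ∀ n : ℤ, w ≠ (n : ℂ) := by
    intro n h
    apply hx n
    have hre := congrArg Complex.re h
    have him := congrArg Complex.im h
    rw [hwre] at hre
    rw [hwim] at him
    simp at hre him
    exact Prod.ext (by simpa using hre) (by simpa using him)
  have key := Stmt6Aux.cot_expansion hw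
  have hcont : Continuous (fun c : ℂ => c.re * y.1 + c.im * y.2) := by fun_prop
  have hcomp := (hcont.tendsto _).comp key
  have hfun : ∀ N : ℕ, (fun c : ℂ => c.re * y.1 + c.im * y.2)
      (∑ n ∈ Finset.Icc (-(N:ℤ)) (N:ℤ), (w + (n:ℂ))⁻¹)
      = ∑ n ∈ Finset.Icc (-(N:ℤ)) (N:ℤ),
        dot (((x + ((n : ℝ), 0)).1 ^ 2 + (x + ((n : ℝ), 0)).2 ^ 2)⁻¹ • (x + ((n : ℝ), 0))) y := by
    intro N
    simp only [Complex.re_sum, Complex.im_sum, Finset.sum_mul, ← Finset.sum_add_distrib]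
    apply Finset.sum_congr rfl
    intro n _
    have h1 : (w + (n:ℂ)).re = x.1 + (n:ℝ) := by
      simp [Complex.add_re, hwre]
    have h2 : (w + (n:ℂ)).im = -x.2 := by
      simp [Complex.add_im, hwim]
    rw [Complex.inv_re, Complex.inv_im, Complex.normSq_apply, h1, h2]
    simp only [dot, Prod.smul_fst, Prod.smul_snd, Prod.fst_add, Prod.snd_add, smul_eq_mul]
    ring
  have hval : (fun c : ℂ => c.re * y.1 + c.im * y.2)
      ((Real.pi : ℂ) * Complex.cot ((Real.pi : ℂ) * w))
      = Real.pi * dot (vec (Complex.cot (Real.pi * w))) y := by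
    simp only [vec, dot, Complex.mul_re, Complex.mul_im, Complex.ofReal_re, Complex.ofReal_im]
    ring
  rw [← hval]
  exact hcomp.congr hfun
end

section
/- The map x ↦ K_∞(x) − K(x), defined on ℝ² ∖ L, extends to a function H : ℝ² ∖ L* → ℝ² each of whose two component functions is harmonic on the open set ℝ² ∖ L* (in particular, the singularity of K_∞ − K at the origin is removable). -/
/-- The singular lattice `L = ℤ × {0} ⊆ ℝ²`. -/
def L : Set (ℝ × ℝ) := {p | ∃ n : ℤ, p = ((n : ℝ), 0)}

/-- `L* = L \ {(0,0)}`. -/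
def Lstar : Set (ℝ × ℝ) := L \ {(0, 0)}

/-- The periodic Biot–Savart kernel
`K_∞ x = (-sinh(2πx₂), sin(2πx₁)) / (2(cosh(2πx₂) - cos(2πx₁)))` on `ℝ² \ L`. -/
noncomputable def Kinf (x : ℝ × ℝ) : ℝ × ℝ :=
  (2 * (Real.cosh (2 * Real.pi * x.2) - Real.cos (2 * Real.pi * x.1)))⁻¹ •
    (-Real.sinh (2 * Real.pi * x.2), Real.sin (2 * Real.pi * x.1))

/-- A real-valued function is harmonic on an open set `U ⊆ ℝ²` if it is `C²` on `U`
and its Laplacian vanishes on `U`. -/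
def HarmonicOn (f : ℝ × ℝ → ℝ) (U : Set (ℝ × ℝ)) : Prop :=
  ContDiffOn ℝ 2 f U ∧
  ∀ x ∈ U, fderiv ℝ (fun y => fderiv ℝ f y (1, 0)) x (1, 0) +
    fderiv ℝ (fun y => fderiv ℝ f y (0, 1)) x (0, 1) = 0


-- ### Auxiliary constructions ###

open Complex in
noncomputable def csinc : ℂ → ℂ := dslope Complex.sin 0

noncomputable def Nf : ℂ → ℂ := fun z =>
  (Real.pi : ℂ) * z * Complex.cos ((Real.pi : ℂ) * z) - Complex.sin ((Real.pi : ℂ) * z)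

noncomputable def Af : ℂ → ℂ := dslope (dslope (dslope Nf 0) 0) 0

noncomputable def Ff : ℂ → ℂ := fun z =>
  Complex.I * z * Af z / (2 * (Real.pi : ℂ) ^ 2 * csinc ((Real.pi : ℂ) * z))

lemma Nf_diff : Differentiable ℂ Nf := by
  unfold Nf
  fun_prop

lemma diff_dslope {f : ℂ → ℂ} (hf : Differentiable ℂ f) : Differentiable ℂ (dslope f 0) := by
  rw [← differentiableOn_univ] at hf ⊢
  exact (Complex.differentiableOn_dslope (by simp)).mpr hf

lemma csinc_diff : Differentiable ℂ csinc := diff_dslope Complex.differentiable_sin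

lemma Af_diff : Differentiable ℂ Af := diff_dslope (diff_dslope (diff_dslope Nf_diff))

lemma csinc_zero : csinc 0 = 1 := by
  rw [csinc, dslope_same, Complex.deriv_sin, Complex.cos_zero]

lemma csinc_apply {z : ℂ} (hz : z ≠ 0) : csinc z = Complex.sin z / z := by
  rw [csinc, dslope_of_ne _ hz, slope_def_field, Complex.sin_zero, sub_zero, sub_zero]

lemma Nf_zero : Nf 0 = 0 := by simp [Nf]

lemma Nf_deriv_zero : deriv Nf 0 = 0 := by
  have h1 : HasDerivAt Nf ((Real.pi : ℂ) * Complex.cos ((Real.pi:ℂ) * 0) +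
      ((Real.pi:ℂ) * 0) * (-Complex.sin ((Real.pi:ℂ)*0) * (Real.pi:ℂ))
      - Complex.cos ((Real.pi:ℂ)*0) * (Real.pi:ℂ)) 0 := by
    unfold Nf
    have hc : HasDerivAt (fun z : ℂ => Complex.cos ((Real.pi:ℂ) * z))
        (-Complex.sin ((Real.pi:ℂ)*0) * (Real.pi:ℂ)) 0 := by
      simpa [Function.comp_def] using (Complex.hasDerivAt_cos ((Real.pi:ℂ)*0)).comp 0
        ((hasDerivAt_id (0:ℂ)).const_mul (Real.pi:ℂ))
    have hs : HasDerivAt (fun z : ℂ => Complex.sin ((Real.pi:ℂ) * z))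
        (Complex.cos ((Real.pi:ℂ)*0) * (Real.pi:ℂ)) 0 := by
      simpa [Function.comp_def] using (Complex.hasDerivAt_sin ((Real.pi:ℂ)*0)).comp 0
        ((hasDerivAt_id (0:ℂ)).const_mul (Real.pi:ℂ))
    have hm : HasDerivAt (fun z : ℂ => (Real.pi:ℂ) * z) (Real.pi:ℂ) 0 := by
      simpa using (hasDerivAt_id (0:ℂ)).const_mul (Real.pi:ℂ)
    simpa [Pi.mul_def, Pi.sub_def] using (hm.mul hc).sub hs
  have := h1.deriv
  simp at this
  simp [this]


lemma Nf_odd (z : ℂ) : Nf (-z) = - Nf z := by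
  simp [Nf]; ring

lemma d1_even (z : ℂ) : dslope Nf 0 (-z) = dslope Nf 0 z := by
  rcases eq_or_ne z 0 with rfl | hz
  · simp
  · rw [dslope_of_ne _ (neg_ne_zero.mpr hz), dslope_of_ne _ hz, slope_def_field,
      slope_def_field, Nf_odd, Nf_zero]
    field_simp
    simp only [sub_zero, neg_mul, neg_div_neg_eq]
    exact mul_div_cancel_right₀ _ hz

lemma d2_zero : dslope (dslope Nf 0) 0 0 = 0 := by
  rw [dslope_same]
  have hd : DifferentiableAt ℂ (dslope Nf 0) 0 := (diff_dslope Nf_diff).differentiableAt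
  have h1 : HasDerivAt (dslope Nf 0) (deriv (dslope Nf 0) 0) 0 := hd.hasDerivAt
  have h2 : HasDerivAt (fun z => dslope Nf 0 (-z)) (deriv (dslope Nf 0) 0 * (-1)) 0 := by
    have h0 : HasDerivAt (dslope Nf 0) (deriv (dslope Nf 0) 0) (-0 : ℂ) := by
      simpa using h1
    simpa [Function.comp_def] using h0.comp (0:ℂ) (hasDerivAt_neg (0:ℂ))
  rw [funext d1_even] at h2
  have h3 := h1.unique h2
  linear_combination h3 / 2

lemma Af_apply {z : ℂ} (hz : z ≠ 0) : Af z = Nf z / z ^ 3 := by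
  rw [Af, dslope_of_ne _ hz, slope_def_field, d2_zero, dslope_of_ne _ hz, slope_def_field,
    dslope_same, Nf_deriv_zero, dslope_of_ne _ hz, slope_def_field, Nf_zero]
  simp only [sub_zero]
  rw [div_div, div_div]
  ring_nf


noncomputable def eL : ℝ × ℝ →L[ℝ] ℂ := Complex.equivRealProdCLM.symm.toContinuousLinearMap

lemma eL_apply (p : ℝ × ℝ) : eL p = (p.1 : ℂ) + (p.2 : ℂ) * Complex.I :=
  Complex.equivRealProdCLM_symm_apply p

@[simp] lemma eL_re (p : ℝ × ℝ) : (eL p).re = p.1 := by simp [eL_apply]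
@[simp] lemma eL_im (p : ℝ × ℝ) : (eL p).im = p.2 := by simp [eL_apply]
@[simp] lemma eL_one : eL (1, 0) = 1 := by simp [eL_apply]
@[simp] lemma eL_I : eL (0, 1) = Complex.I := by simp [eL_apply]

noncomputable def mulc (m : ℂ) : ℂ →L[ℝ] ℂ := (m • (1 : ℂ →L[ℂ] ℂ)).restrictScalars ℝ

@[simp] lemma mulc_apply (m w : ℂ) : mulc m w = m * w := by
  simp [mulc]

lemma key (ℓ : ℂ →L[ℝ] ℝ) (c : ℂ) (G : ℂ → ℂ) (y : ℝ × ℝ)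
    (hG : DifferentiableAt ℂ G (eL y)) :
    HasFDerivAt (fun w => ℓ (c * G (eL w)))
      ((ℓ.comp (mulc (c * deriv G (eL y)))).comp eL) y := by
  have h1 : HasFDerivAt eL eL y := eL.hasFDerivAt
  have h2 : HasFDerivAt G (mulc (deriv G (eL y))) (eL y) := by
    have h3 := (hG.hasDerivAt.hasFDerivAt).restrictScalars ℝ
    refine h3.congr_fderiv ?_
    ext w
    simp [mul_comm]
  have h4 : HasFDerivAt (fun w => G (eL w)) ((mulc (deriv G (eL y))).comp eL) y :=
    h2.comp y h1
  have h5 : HasFDerivAt (fun u : ℂ => ℓ (c * u)) (ℓ.comp (mulc c)) (G (eL y)) := by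
    have h6 := (ℓ.comp (mulc c)).hasFDerivAt (x := G (eL y))
    convert h6 using 1
    funext u; simp
  have h7 := h5.comp y h4
  refine h7.congr_fderiv ?_
  refine ContinuousLinearMap.ext fun v => ?_
  simp [mul_assoc]

lemma harmonic_comp (F : ℂ → ℂ) (U : Set ℂ) (hU : IsOpen U)
    (hF : DifferentiableOn ℂ F U) (ℓ : ℂ →L[ℝ] ℝ) :
    HarmonicOn (fun x => ℓ (F (eL x))) (eL ⁻¹' U) := by
  have hUo : IsOpen (eL ⁻¹' U) := hU.preimage eL.continuous
  have hAn : AnalyticOnNhd ℂ F U := hF.analyticOnNhd hU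
  have hAn' : AnalyticOnNhd ℂ (deriv F) U := hAn.deriv
  constructor
  · have hC : ContDiffOn ℝ 2 F U :=
      (hAn.contDiffOn_of_completeSpace).restrict_scalars ℝ
    have hC2 : ContDiffOn ℝ 2 (fun x => F (eL x)) (eL ⁻¹' U) :=
      hC.comp (eL.contDiff.contDiffOn) (Set.mapsTo_preimage _ _)
    exact ℓ.contDiff.comp_contDiffOn hC2
  · intro x hx
    -- first derivative description
    have hfder : ∀ y ∈ eL ⁻¹' U,
        fderiv ℝ (fun w => ℓ (F (eL w))) y
          = (ℓ.comp (mulc (1 * deriv F (eL y)))).comp eL := by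
      intro y hy
      have hk := key ℓ 1 F y ((hAn (eL y) hy).differentiableAt)
      have : (fun w => ℓ (1 * F (eL w))) = fun w => ℓ (F (eL w)) := by
        funext w; rw [one_mul]
      rw [this] at hk
      exact hk.fderiv
    have hmem : eL ⁻¹' U ∈ nhds x := hUo.mem_nhds hx
    have e1 : (fun y => fderiv ℝ (fun w => ℓ (F (eL w))) y (1, 0))
        =ᶠ[nhds x] (fun y => ℓ (1 * deriv F (eL y))) := by
      filter_upwards [hmem] with y hy
      rw [hfder y hy]
      simp
    have e2 : (fun y => fderiv ℝ (fun w => ℓ (F (eL w))) y (0, 1))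
        =ᶠ[nhds x] (fun y => ℓ (Complex.I * deriv F (eL y))) := by
      filter_upwards [hmem] with y hy
      rw [hfder y hy]
      simp [mul_comm]
    rw [e1.fderiv_eq, e2.fderiv_eq]
    have hd' : DifferentiableAt ℂ (deriv F) (eL x) := (hAn' (eL x) hx).differentiableAt
    have k1 := (key ℓ 1 (deriv F) x hd').fderiv
    have k2 := (key ℓ Complex.I (deriv F) x hd').fderiv
    rw [k1, k2]
    simp only [ContinuousLinearMap.comp_apply, mulc_apply, eL_one, eL_I]
    rw [← map_add]
    have : 1 * deriv (deriv F) (eL x) * 1 + Complex.I * deriv (deriv F) (eL x) * Complex.I = 0 := by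
      linear_combination (deriv (deriv F) (eL x)) * Complex.I_sq
    rw [this, map_zero]


open Topology in
def Uset : Set ℂ := {z | ∀ n : ℤ, n ≠ 0 → z ≠ (n : ℂ)}

lemma eL_eq_int_iff (x : ℝ × ℝ) (n : ℤ) : eL x = (n : ℂ) ↔ x = ((n : ℝ), 0) := by
  rw [eL_apply, Complex.ext_iff, Prod.ext_iff]
  simp

lemma Uset_open : IsOpen Uset := by
  have h : Uset = ((fun n : ℤ => (n : ℂ)) '' {n : ℤ | n ≠ 0})ᶜ := by
    ext z
    simp only [Uset, Set.mem_setOf_eq, Set.mem_compl_iff, Set.mem_image, not_exists]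
    constructor
    · rintro h n ⟨hn, hz⟩
      exact h n hn hz.symm
    · intro h n hn hz
      exact h n ⟨hn, hz.symm⟩
  rw [h]
  rw [isOpen_compl_iff]
  have hemb : Topology.IsClosedEmbedding (fun n : ℤ => (n : ℂ)) := by
    have h1 : Topology.IsClosedEmbedding ((↑) : ℝ → ℂ) := Complex.isometry_ofReal.isClosedEmbedding
    have h2 := h1.comp Int.isClosedEmbedding_coe_real
    exact h2
  exact hemb.isClosedMap _ (isClosed_discrete _)

lemma preimage_Uset : eL ⁻¹' Uset = Lstarᶜ := by
  ext x
  simp only [Set.mem_preimage, Uset, Set.mem_setOf_eq, Set.mem_compl_iff, Lstar, L,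
    Set.mem_diff, Set.mem_setOf_eq, Set.mem_singleton_iff, not_and, not_not]
  constructor
  · rintro h ⟨n, rfl⟩
    rcases eq_or_ne n 0 with rfl | hn
    · norm_num
    · exact absurd ((eL_eq_int_iff _ n).mpr rfl) (h n hn)
  · intro h n hn hz
    have hx : x = ((n : ℝ), 0) := (eL_eq_int_iff x n).mp hz
    have := h ⟨n, hx⟩
    rw [hx] at this
    have : (n : ℝ) = 0 := by
      simpa [Prod.ext_iff] using this
    exact hn (by exact_mod_cast this)

-- membership facts
lemma mem_Uset_of_not_int {z : ℂ} (h : ∀ n : ℤ, z ≠ (n : ℂ)) : z ∈ Uset := fun n hn => h n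

lemma sin_pi_ne_zero {z : ℂ} (h : ∀ n : ℤ, z ≠ (n : ℂ)) :
    Complex.sin ((Real.pi : ℂ) * z) ≠ 0 := by
  rw [Complex.sin_ne_zero_iff]
  intro k hk
  apply h k
  have hπ : (Real.pi : ℂ) ≠ 0 := Complex.ofReal_ne_zero.mpr Real.pi_ne_zero
  exact mul_left_cancel₀ hπ (by rw [hk]; ring)


lemma hpiC : (Real.pi : ℂ) ≠ 0 := Complex.ofReal_ne_zero.mpr Real.pi_ne_zero

lemma csinc_pi_ne_zero {z : ℂ} (hz : z ∈ Uset) : csinc ((Real.pi : ℂ) * z) ≠ 0 := by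
  rcases eq_or_ne z 0 with rfl | h0
  · rw [mul_zero, csinc_zero]; exact one_ne_zero
  · have hint : ∀ n : ℤ, z ≠ (n : ℂ) := by
      intro n
      rcases eq_or_ne n 0 with rfl | hn
      · simpa using h0
      · exact hz n hn
    rw [csinc_apply (mul_ne_zero hpiC h0)]
    exact div_ne_zero (sin_pi_ne_zero hint) (mul_ne_zero hpiC h0)

lemma Ff_diffOn : DifferentiableOn ℂ Ff Uset := by
  apply DifferentiableOn.div
  · exact (((differentiable_const _).mul differentiable_id).mul Af_diff).differentiableOn
  · exact ((differentiable_const _).mul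
      (csinc_diff.comp (differentiable_id.const_mul _))).differentiableOn
  · intro z hz
    exact mul_ne_zero (mul_ne_zero two_ne_zero (pow_ne_zero _ hpiC)) (csinc_pi_ne_zero hz)

lemma Ff_eq {z : ℂ} (h0 : z ≠ 0) (hs : Complex.sin ((Real.pi : ℂ) * z) ≠ 0) :
    Ff z = Complex.I * Nf z / (2 * (Real.pi : ℂ) * z * Complex.sin ((Real.pi : ℂ) * z)) := by
  rw [Ff, Af_apply h0, csinc_apply (mul_ne_zero hpiC h0)]
  rw [div_eq_div_iff]
  · field_simp [h0, hpiC]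
  · exact mul_ne_zero (mul_ne_zero two_ne_zero (pow_ne_zero _ hpiC))
      (div_ne_zero hs (mul_ne_zero hpiC h0))
  · exact mul_ne_zero (mul_ne_zero (mul_ne_zero two_ne_zero hpiC) h0) hs


lemma csin_expand (u v : ℝ) : Complex.sin ((u:ℂ) + (v:ℂ) * Complex.I) =
    ((Real.sin u * Real.cosh v : ℝ) : ℂ) + ((Real.cos u * Real.sinh v : ℝ) : ℂ) * Complex.I := by
  rw [Complex.sin_add, Complex.sin_mul_I, Complex.cos_mul_I]
  push_cast
  ring


lemma ccos_expand (u v : ℝ) : Complex.cos ((u:ℂ) + (v:ℂ) * Complex.I) =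
    ((Real.cos u * Real.cosh v : ℝ) : ℂ) - ((Real.sin u * Real.sinh v : ℝ) : ℂ) * Complex.I := by
  rw [Complex.cos_add, Complex.sin_mul_I, Complex.cos_mul_I]
  push_cast
  ring


lemma main_identity (a b : ℝ) (hz0 : ((a:ℂ) + (b:ℂ) * Complex.I) ≠ 0)
    (hs : Complex.sin ((Real.pi : ℂ) * ((a:ℂ) + (b:ℂ) * Complex.I)) ≠ 0) :
    Ff ((a:ℂ) + (b:ℂ) * Complex.I) =
      (((2 * (Real.cosh (2 * Real.pi * b) - Real.cos (2 * Real.pi * a)))⁻¹ * Real.sinh (2 * Real.pi * b)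
        - (2 * Real.pi * (a ^ 2 + b ^ 2))⁻¹ * b : ℝ) : ℂ)
      + (((2 * (Real.cosh (2 * Real.pi * b) - Real.cos (2 * Real.pi * a)))⁻¹ * Real.sin (2 * Real.pi * a)
        - (2 * Real.pi * (a ^ 2 + b ^ 2))⁻¹ * a : ℝ) : ℂ) * Complex.I := by
  have harg : (Real.pi : ℂ) * ((a:ℂ) + (b:ℂ) * Complex.I)
      = ((Real.pi * a : ℝ) : ℂ) + ((Real.pi * b : ℝ) : ℂ) * Complex.I := by
    push_cast; ring
  have hr1 : Real.sin (Real.pi * a) ^ 2 + Real.cos (Real.pi * a) ^ 2 = 1 :=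
    Real.sin_sq_add_cos_sq _
  have hr2 : Real.cosh (Real.pi * b) ^ 2 - Real.sinh (Real.pi * b) ^ 2 = 1 :=
    Real.cosh_sq_sub_sinh_sq _
  have hQ : Real.sin (Real.pi * a) ^ 2 + Real.sinh (Real.pi * b) ^ 2 ≠ 0 := by
    intro h
    have h1 : Real.sin (Real.pi * a) = 0 := by
      nlinarith [sq_nonneg (Real.sin (Real.pi * a)), sq_nonneg (Real.sinh (Real.pi * b))]
    have h2 : Real.sinh (Real.pi * b) = 0 := by
      nlinarith [sq_nonneg (Real.sin (Real.pi * a)), sq_nonneg (Real.sinh (Real.pi * b))]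
    apply hs
    rw [harg, csin_expand, h1, h2]
    simp
  have hab2 : a ^ 2 + b ^ 2 ≠ 0 := by
    intro h
    have h1 : a = 0 := by nlinarith [sq_nonneg a, sq_nonneg b]
    have h2 : b = 0 := by nlinarith [sq_nonneg a, sq_nonneg b]
    apply hz0
    rw [h1, h2]; simp
  have hden : (2 * (Real.pi : ℂ) * ((a:ℂ) + (b:ℂ) * Complex.I)
      * Complex.sin ((Real.pi : ℂ) * ((a:ℂ) + (b:ℂ) * Complex.I))) ≠ 0 :=
    mul_ne_zero (mul_ne_zero (mul_ne_zero two_ne_zero hpiC) hz0) hs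
  rw [Ff_eq hz0 hs, div_eq_iff hden]
  rw [show 2 * Real.pi * b = 2 * (Real.pi * b) by ring,
    show 2 * Real.pi * a = 2 * (Real.pi * a) by ring]
  rw [Nf, harg, csin_expand, ccos_expand]
  rw [Real.cosh_two_mul, Real.cos_two_mul', Real.sinh_two_mul, Real.sin_two_mul]
  set sa := Real.sin (Real.pi * a) with hsadef
  set ca := Real.cos (Real.pi * a) with hcadef
  set sb := Real.sinh (Real.pi * b) with hsbdef
  set cb := Real.cosh (Real.pi * b) with hcbdef
  have hQC : ((sa : ℂ) ^ 2 + (sb : ℂ) ^ 2) ≠ 0 := by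
    intro h; apply hQ; exact_mod_cast h
  have habC : ((a : ℂ) ^ 2 + (b : ℂ) ^ 2) ≠ 0 := by
    intro h; apply hab2; exact_mod_cast h
  have hBC : ((cb : ℂ) ^ 2 + (sb : ℂ) ^ 2 - ((ca : ℂ) ^ 2 - (sa : ℂ) ^ 2)) ≠ 0 := by
    have h0 : (cb ^ 2 + sb ^ 2 - (ca ^ 2 - sa ^ 2) : ℝ) ≠ 0 := by
      intro h; apply hQ; nlinarith
    intro h; apply h0; exact_mod_cast h
  have hr1C : (sa : ℂ) ^ 2 + (ca : ℂ) ^ 2 = 1 := by exact_mod_cast hr1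
  have hr2C : (cb : ℂ) ^ 2 - (sb : ℂ) ^ 2 = 1 := by exact_mod_cast hr2
  clear_value sa ca sb cb
  have hd1 : ((2:ℂ) * ((cb:ℂ) ^ 2 + (sb:ℂ) ^ 2 - ((ca:ℂ) ^ 2 - (sa:ℂ) ^ 2))) ≠ 0 :=
    mul_ne_zero two_ne_zero hBC
  have hd2 : ((2:ℂ) * (Real.pi:ℂ) * ((a:ℂ) ^ 2 + (b:ℂ) ^ 2)) ≠ 0 :=
    mul_ne_zero (mul_ne_zero two_ne_zero hpiC) habC
  push_cast
  field_simp [hd1, hd2]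
  linear_combination ((-1*Complex.I*(Real.pi:ℂ)*(a:ℂ)^3*(ca:ℂ)*(cb:ℂ)) + (-1*Complex.I*(Real.pi:ℂ)*(a:ℂ)*(b:ℂ)^2*(ca:ℂ)*(cb:ℂ)) + (1*(Real.pi:ℂ)*(a:ℂ)^3*(sa:ℂ)*(sb:ℂ)) + (1*(Real.pi:ℂ)*(a:ℂ)*(b:ℂ)^2*(sa:ℂ)*(sb:ℂ)) + (1*(Real.pi:ℂ)*(a:ℂ)^2*(b:ℂ)*(ca:ℂ)*(cb:ℂ)) + (1*(Real.pi:ℂ)*(b:ℂ)^3*(ca:ℂ)*(cb:ℂ)) + (1*Complex.I*(Real.pi:ℂ)*(a:ℂ)^2*(b:ℂ)*(sa:ℂ)*(sb:ℂ)) + (1*Complex.I*(Real.pi:ℂ)*(b:ℂ)^3*(sa:ℂ)*(sb:ℂ))) * hr1C + ((1*Complex.I*(Real.pi:ℂ)*(a:ℂ)^3*(ca:ℂ)*(cb:ℂ)) + (1*Complex.I*(Real.pi:ℂ)*(a:ℂ)*(b:ℂ)^2*(ca:ℂ)*(cb:ℂ)) + (-1*(Real.pi:ℂ)*(a:ℂ)^3*(sa:ℂ)*(sb:ℂ))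 + (-1*(Real.pi:ℂ)*(a:ℂ)*(b:ℂ)^2*(sa:ℂ)*(sb:ℂ)) + (-1*Complex.I*(Real.pi:ℂ)*(a:ℂ)^2*(b:ℂ)*(sa:ℂ)*(sb:ℂ)) + (-1*Complex.I*(Real.pi:ℂ)*(b:ℂ)^3*(sa:ℂ)*(sb:ℂ)) + (-1*(Real.pi:ℂ)*(a:ℂ)^2*(b:ℂ)*(ca:ℂ)*(cb:ℂ)) + (-1*(Real.pi:ℂ)*(b:ℂ)^3*(ca:ℂ)*(cb:ℂ))) * hr2C + ((-1*(Real.pi:ℂ)*(a:ℂ)^3*(cb:ℂ)^2*(sa:ℂ)*(sb:ℂ)) + (-1*(Real.pi:ℂ)*(a:ℂ)*(b:ℂ)^2*(cb:ℂ)^2*(sa:ℂ)*(sb:ℂ)) + (-1*(Real.pi:ℂ)*(a:ℂ)^3*(sa:ℂ)*(sb:ℂ)^3) + (-1*(Real.pi:ℂ)*(a:ℂ)*(b:ℂ)^2*(sa:ℂ)*(sb:ℂ)^3) + (-1*(Real.pi:ℂ)*(a:ℂ)^3*(ca:ℂ)^2*(sa:ℂ)*(sb:ℂ)) + (-1*(Real.pi:ℂ)*(a:ℂ)*(b:ℂ)^2*(ca:ℂ)^2*(sa:ℂ)*(sb:ℂ))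 + (-1*(Real.pi:ℂ)*(a:ℂ)^3*(sa:ℂ)^3*(sb:ℂ)) + (-1*(Real.pi:ℂ)*(a:ℂ)*(b:ℂ)^2*(sa:ℂ)^3*(sb:ℂ)) + (1*(Real.pi:ℂ)*(a:ℂ)^2*(b:ℂ)*(ca:ℂ)*(cb:ℂ)^3) + (1*(Real.pi:ℂ)*(b:ℂ)^3*(ca:ℂ)*(cb:ℂ)^3) + (-1*(Real.pi:ℂ)*(a:ℂ)^2*(b:ℂ)*(ca:ℂ)*(cb:ℂ)*(sb:ℂ)^2) + (-1*(Real.pi:ℂ)*(b:ℂ)^3*(ca:ℂ)*(cb:ℂ)*(sb:ℂ)^2) + (-1*(Real.pi:ℂ)*(a:ℂ)^2*(b:ℂ)*(ca:ℂ)^3*(cb:ℂ)) + (-1*(Real.pi:ℂ)*(b:ℂ)^3*(ca:ℂ)^3*(cb:ℂ)) + (-1*(Real.pi:ℂ)*(a:ℂ)^2*(b:ℂ)*(ca:ℂ)*(cb:ℂ)*(sa:ℂ)^2) + (-1*(Real.pi:ℂ)*(b:ℂ)^3*(ca:ℂ)*(cb:ℂ)*(sa:ℂ)^2) + (-1*Complex.I*(Real.pi:ℂ)*(a:ℂ)^2*(b:ℂ)*(cb:ℂ)^2*(sa:ℂ)*(sb:ℂ))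 + (-1*Complex.I*(Real.pi:ℂ)*(b:ℂ)^3*(cb:ℂ)^2*(sa:ℂ)*(sb:ℂ)) + (-1*Complex.I*(Real.pi:ℂ)*(a:ℂ)^2*(b:ℂ)*(sa:ℂ)*(sb:ℂ)^3) + (-1*Complex.I*(Real.pi:ℂ)*(b:ℂ)^3*(sa:ℂ)*(sb:ℂ)^3) + (-1*Complex.I*(Real.pi:ℂ)*(a:ℂ)^2*(b:ℂ)*(ca:ℂ)^2*(sa:ℂ)*(sb:ℂ)) + (-1*Complex.I*(Real.pi:ℂ)*(b:ℂ)^3*(ca:ℂ)^2*(sa:ℂ)*(sb:ℂ)) + (-1*Complex.I*(Real.pi:ℂ)*(a:ℂ)^2*(b:ℂ)*(sa:ℂ)^3*(sb:ℂ)) + (-1*Complex.I*(Real.pi:ℂ)*(b:ℂ)^3*(sa:ℂ)^3*(sb:ℂ)) + (1*(a:ℂ)*(b:ℂ)*(cb:ℂ)^3*(sa:ℂ)) + (1*(a:ℂ)*(b:ℂ)*(cb:ℂ)*(sa:ℂ)*(sb:ℂ)^2) + (-1*(a:ℂ)*(b:ℂ)*(ca:ℂ)^2*(cb:ℂ)*(sa:ℂ))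 + (1*(a:ℂ)*(b:ℂ)*(cb:ℂ)*(sa:ℂ)^3) + (1*Complex.I*(a:ℂ)*(b:ℂ)*(ca:ℂ)*(cb:ℂ)^2*(sb:ℂ)) + (1*Complex.I*(a:ℂ)*(b:ℂ)*(ca:ℂ)*(sb:ℂ)^3) + (-1*Complex.I*(a:ℂ)*(b:ℂ)*(ca:ℂ)^3*(sb:ℂ)) + (1*Complex.I*(a:ℂ)*(b:ℂ)*(ca:ℂ)*(sa:ℂ)^2*(sb:ℂ))) * Complex.I_sq


/-- `K_∞ - K` extends to a function `H` on `ℝ² \ L*` whose components are harmonic there. -/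
theorem stmt9 : ∃ H : ℝ × ℝ → ℝ × ℝ,
    (∀ x : ℝ × ℝ, x ∉ L → H x = Kinf x - K x) ∧
    HarmonicOn (fun x => (H x).1) Lstarᶜ ∧
    HarmonicOn (fun x => (H x).2) Lstarᶜ := by
  refine ⟨fun x => (-(Ff (eL x)).re, (Ff (eL x)).im), ?_, ?_, ?_⟩
  · intro x hx
    have hint : ∀ n : ℤ, eL x ≠ (n : ℂ) := fun n hn => hx ⟨n, (eL_eq_int_iff x n).mp hn⟩
    have hz0 : eL x ≠ 0 := fun h => hint 0 (by simpa using h)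
    have hs := sin_pi_ne_zero hint
    have hform : eL x = ((x.1 : ℂ) + (x.2 : ℂ) * Complex.I) := eL_apply x
    rw [hform] at hz0 hs
    have hmain := main_identity x.1 x.2 hz0 hs
    rw [← hform] at hmain
    show (-(Ff (eL x)).re, (Ff (eL x)).im) = Kinf x - K x
    rw [hmain]
    have h1 : (Kinf x - K x).1 =
        (2 * (Real.cosh (2 * Real.pi * x.2) - Real.cos (2 * Real.pi * x.1)))⁻¹ *
          (-Real.sinh (2 * Real.pi * x.2))
        - (2 * Real.pi * (x.1 ^ 2 + x.2 ^ 2))⁻¹ * (-x.2) := by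
      simp [Kinf, K]
    have h2 : (Kinf x - K x).2 =
        (2 * (Real.cosh (2 * Real.pi * x.2) - Real.cos (2 * Real.pi * x.1)))⁻¹ *
          Real.sin (2 * Real.pi * x.1)
        - (2 * Real.pi * (x.1 ^ 2 + x.2 ^ 2))⁻¹ * x.1 := by
      simp [Kinf, K]
    refine Prod.ext ?_ ?_
    · show -(_ + _ : ℂ).re = _
      rw [h1]
      simp only [Complex.add_re, Complex.ofReal_re, Complex.mul_re, Complex.I_re,
        Complex.ofReal_im, Complex.I_im, mul_zero, zero_mul, mul_one, sub_zero,
        zero_sub, neg_zero, add_zero]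
      ring
    · show (_ + _ : ℂ).im = _
      rw [h2]
      simp only [Complex.add_im, Complex.ofReal_im, Complex.mul_im, Complex.I_im,
        Complex.ofReal_re, Complex.I_re, mul_zero, zero_mul, mul_one, add_zero,
        zero_add]
  · have h := harmonic_comp Ff Uset Uset_open Ff_diffOn (-Complex.reCLM)
    rw [preimage_Uset] at h
    have heq : (fun x : ℝ × ℝ => (-Complex.reCLM) (Ff (eL x)))
        = fun x : ℝ × ℝ => (((-(Ff (eL x)).re, (Ff (eL x)).im) : ℝ × ℝ)).1 := by
      funext y; simp
    rw [heq] at h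
    exact h
  · have h := harmonic_comp Ff Uset Uset_open Ff_diffOn Complex.imCLM
    rw [preimage_Uset] at h
    have heq : (fun x : ℝ × ℝ => Complex.imCLM (Ff (eL x)))
        = fun x : ℝ × ℝ => (((-(Ff (eL x)).re, (Ff (eL x)).im) : ℝ × ℝ)).2 := by
      funext y; simp
    rw [heq] at h
    exact h
end
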